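/- arXiv:0802.0261 — 9 statements merged into one kernel-verified Lean document; each statement's English description precedes it below -/
import Mathlib

section
/- For every ρ > 0 and every real x ≥ 0, setting w = W_ρ(x) = (x·sinh ρ − 1)/(x + sinh ρ), one has w < x, and the geodesic γ(x, w) with ideal endpoints x and w is tangent to the hyperbolic disc B_ρ(i); that is, inf_{z ∈ γ(x,w)} dist(z, i) = ρ. -/
open UpperHalfPlane MeasureTheory

/-- The complete hyperbolic geodesic of the upper half-plane with ideal endpoints `a` and `b`:
the Euclidean semicircle `{z ∈ ℍ : |z − (a+b)/2| = |a−b|/2}`. -/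
noncomputable def geodesic (a b : ℝ) : Set ℍ :=
  {z : ℍ | ‖(z : ℂ) - (((a + b) / 2 : ℝ) : ℂ)‖ = |a - b| / 2}

/-- The geodesic `γ(a,b)` is tangent to the hyperbolic disc `B_ρ(i)`:
the infimum of the hyperbolic distance from points of the geodesic to `i` equals `ρ`. -/
def TangentToDisc (a b ρ : ℝ) : Prop :=
  sInf ((fun z : ℍ => dist z UpperHalfPlane.I) '' geodesic a b) = ρ

/-- The geodesic `γ(a,b)` intersects the closed hyperbolic disc `B̄_r(i)`. -/
def MeetsClosedDisc (a b r : ℝ) : Prop :=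
  ∃ z ∈ geodesic a b, dist z UpperHalfPlane.I ≤ r

set_option maxHeartbeats 1000000 in
/-- For every ρ > 0 and every real x ≥ 0, setting w = W_ρ(x) = (x·sinh ρ − 1)/(x + sinh ρ),
one has w < x, and the geodesic γ(x, w) is tangent to the hyperbolic disc B_ρ(i). -/
theorem tangent_W (ρ : ℝ) (hρ : 0 < ρ) (x : ℝ) (hx : 0 ≤ x) :
    (x * Real.sinh ρ - 1) / (x + Real.sinh ρ) < x ∧
      TangentToDisc x ((x * Real.sinh ρ - 1) / (x + Real.sinh ρ)) ρ := by
  have hs0 : 0 < Real.sinh ρ := Real.sinh_pos_iff.mpr hρ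
  set s := Real.sinh ρ with hs
  clear_value s
  have hxs : 0 < x + s := by linarith
  set w := (x * s - 1) / (x + s) with hw
  clear_value w
  have hxw : w < x := by
    rw [hw, div_lt_iff₀ hxs]; nlinarith [sq_nonneg x]
  refine ⟨hxw, ?_⟩
  set K := Real.cosh ρ with hK
  have hKsq : K ^ 2 = s ^ 2 + 1 := by rw [hK, hs]; exact Real.cosh_sq ρ
  have hK1 : 1 ≤ K := by rw [hK]; exact Real.one_le_cosh ρ
  have hK0 : 0 < K := by linarith
  clear_value K
  set c := (x + w) / 2 with hc
  set r := (x - w) / 2 with hr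
  clear_value c r
  have hr0 : 0 < r := by rw [hr]; linarith
  set A := c ^ 2 + r ^ 2 + 1 with hA
  clear_value A
  have hA0 : 0 < A := by rw [hA]; positivity
  have hkid : 4 * K ^ 2 * r ^ 2 = A ^ 2 - 4 * c ^ 2 * r ^ 2 := by
    rw [hA, hc, hr, hw, hKsq]
    field_simp
    ring
  have habs2 : |x - w| = 2 * r := by
    rw [abs_of_pos (by linarith : (0:ℝ) < x - w), hr]; ring
  -- the witness (tangency) point
  set q₀ := 2 * K * r ^ 2 / A with hq₀def
  set p₀ := c - 2 * c * r ^ 2 / A with hp₀def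
  have hq₀0 : 0 < q₀ := by rw [hq₀def]; positivity
  set z₀ : ℍ := ⟨⟨p₀, q₀⟩, hq₀0⟩ with hz₀
  have hz₀re : (z₀ : ℂ).re = p₀ := rfl
  have hz₀im : (z₀ : ℂ).im = q₀ := rfl
  have hz₀im' : z₀.im = q₀ := rfl
  clear_value q₀ p₀ z₀
  have hmem : z₀ ∈ geodesic x w := by
    show ‖(z₀ : ℂ) - (((x + w) / 2 : ℝ) : ℂ)‖ = |x - w| / 2
    have h2 : Complex.normSq ((z₀ : ℂ) - (((x + w) / 2 : ℝ) : ℂ)) = r ^ 2 := by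
      rw [Complex.normSq_apply]
      simp only [Complex.sub_re, Complex.sub_im, Complex.ofReal_re, Complex.ofReal_im,
        hz₀re, hz₀im, sub_zero]
      rw [← hc, hp₀def, hq₀def]
      field_simp
      linear_combination r ^ 2 * hkid
    rw [Complex.norm_def, h2, Real.sqrt_sq hr0.le, habs2]
    ring
  have heq : p₀ ^ 2 + q₀ ^ 2 + 1 = 2 * K * q₀ := by
    have hkid' : 4 * K ^ 2 * r ^ 2 = (c ^ 2 + r ^ 2 + 1) ^ 2 - 4 * c ^ 2 * r ^ 2 := by
      rw [← hA]; exact hkid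
    rw [hp₀def, hq₀def, hA]
    field_simp
    linear_combination (r ^ 2 - (c ^ 2 + r ^ 2 + 1)) * hkid'
  have hcoshd : Real.cosh (dist z₀ UpperHalfPlane.I) = K := by
    rw [UpperHalfPlane.cosh_dist]
    have hd2 : dist (z₀ : ℂ) ((UpperHalfPlane.I : ℍ) : ℂ) ^ 2 = p₀ ^ 2 + (q₀ - 1) ^ 2 := by
      rw [Complex.dist_eq, Complex.sq_norm, Complex.normSq_apply]
      simp only [Complex.sub_re, Complex.sub_im, UpperHalfPlane.coe_I, Complex.I_re,
        Complex.I_im, hz₀re, hz₀im, sub_zero]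
      ring
    rw [hd2, show (UpperHalfPlane.I).im = 1 from rfl, hz₀im']
    field_simp
    linear_combination heq
  have hdist : dist z₀ UpperHalfPlane.I = ρ := by
    have h1 : Real.cosh (dist z₀ UpperHalfPlane.I) = Real.cosh ρ := by rw [hcoshd, hK]
    have h2 : |dist z₀ UpperHalfPlane.I| = |ρ| := by
      by_contra h
      rcases lt_or_gt_of_ne h with h' | h'
      · exact absurd h1 (ne_of_lt (Real.cosh_lt_cosh.mpr h'))
      · exact absurd h1 (ne_of_gt (Real.cosh_lt_cosh.mpr h'))
    rwa [abs_of_nonneg dist_nonneg, abs_of_pos hρ] at h2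
  have hlb : ∀ z ∈ geodesic x w, ρ ≤ dist z UpperHalfPlane.I := by
    intro z hz
    obtain ⟨p, hp⟩ : ∃ p, z.re = p := ⟨_, rfl⟩
    obtain ⟨q, hq'⟩ : ∃ q, z.im = q := ⟨_, rfl⟩
    have hq : 0 < q := hq' ▸ z.im_pos
    have habs : ‖(z : ℂ) - (((x + w) / 2 : ℝ) : ℂ)‖ = |x - w| / 2 := hz
    have hsq : (p - c) ^ 2 + q ^ 2 = r ^ 2 := by
      have h1 : Complex.normSq ((z : ℂ) - (((x + w) / 2 : ℝ) : ℂ)) = r ^ 2 := by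
        rw [← Complex.sq_norm, habs, habs2]; ring
      rw [Complex.normSq_apply] at h1
      simp only [Complex.sub_re, Complex.sub_im, Complex.ofReal_re, Complex.ofReal_im,
        UpperHalfPlane.coe_re, UpperHalfPlane.coe_im, sub_zero, hp, hq'] at h1
      rw [hc]
      linear_combination h1
    have hcosh_ge : Real.cosh ρ ≤ Real.cosh (dist z UpperHalfPlane.I) := by
      rw [UpperHalfPlane.cosh_dist]
      have hd2 : dist (z : ℂ) ((UpperHalfPlane.I : ℍ) : ℂ) ^ 2 = p ^ 2 + (q - 1) ^ 2 := by
        rw [Complex.dist_eq, Complex.sq_norm, Complex.normSq_apply]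
        simp only [Complex.sub_re, Complex.sub_im, UpperHalfPlane.coe_I, Complex.I_re,
          Complex.I_im, UpperHalfPlane.coe_re, UpperHalfPlane.coe_im, sub_zero, hp, hq']
        ring
      rw [hd2, show (UpperHalfPlane.I).im = 1 from rfl, hq', ← hK]
      have e1 : A ^ 2 = (4 * c ^ 2 + 4 * K ^ 2) * ((p - c) ^ 2 + q ^ 2) := by
        rw [hsq]; linear_combination (-1 : ℝ) * hkid
      have hC : (2 * c * (p - c) - 2 * K * q) ^ 2 ≤ A ^ 2 := by
        have hid : A ^ 2 - (2 * c * (p - c) - 2 * K * q) ^ 2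
            = (2 * c * q + 2 * K * (p - c)) ^ 2 := by rw [e1]; ring
        linarith [sq_nonneg (2 * c * q + 2 * K * (p - c)), hid]
      have hApt : 0 ≤ A + (2 * c * (p - c) - 2 * K * q) := by
        have h5 : |2 * c * (p - c) - 2 * K * q| ≤ A := by
          rw [← Real.sqrt_sq hA0.le, ← Real.sqrt_sq_eq_abs]
          exact Real.sqrt_le_sqrt hC
        have h6 := neg_abs_le (2 * c * (p - c) - 2 * K * q)
        linarith
      have heq2 : p ^ 2 + q ^ 2 + 1 = A + 2 * c * (p - c) := by
        linear_combination hsq - hA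
      have key : 2 * q * K ≤ p ^ 2 + q ^ 2 + 1 := by linarith
      have h2q : (0:ℝ) < 2 * q := by linarith
      calc K = (2 * q * K) / (2 * q) := by field_simp
        _ ≤ (p ^ 2 + q ^ 2 + 1) / (2 * q) := by
            exact (div_le_div_iff_of_pos_right h2q).mpr key
        _ = 1 + (p ^ 2 + (q - 1) ^ 2) / (2 * q * 1) := by field_simp; ring
    have h3 := Real.cosh_le_cosh.mp hcosh_ge
    rwa [abs_of_nonneg dist_nonneg, abs_of_pos hρ] at h3
  unfold TangentToDisc
  have hmem' : ρ ∈ (fun z : ℍ => dist z UpperHalfPlane.I) '' geodesic x w := ⟨z₀, hmem, hdist⟩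
  have hlb' : ∀ d ∈ (fun z : ℍ => dist z UpperHalfPlane.I) '' geodesic x w, ρ ≤ d := by
    rintro d ⟨z, hz, rfl⟩; exact hlb z hz
  exact le_antisymm (csInf_le ⟨ρ, hlb'⟩ hmem') (le_csInf ⟨ρ, hmem'⟩ hlb')
end

section
/- For every ρ > 0 and every real x ≥ 0 with x ≠ sinh ρ, setting u = U_ρ(x) = (x·sinh ρ + 1)/(−x + sinh ρ), one has u ≠ x, and the geodesic γ(x, u) with ideal endpoints x and u is tangent to the hyperbolic disc B_ρ(i); that is, inf_{z ∈ γ(x,u)} dist(z, i) = ρ. -/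
open UpperHalfPlane MeasureTheory

/-- Cauchy–Schwarz style lower bound for points on the circle of center `c`, radius `r`. -/
lemma aux_lower (c r K X y : ℝ) (hr : 0 < r) (hK : 0 < K)
    (hid : (c^2+r^2+1)^2 - (2*c*r)^2 = (2*r*K)^2)
    (hz : (X-c)^2 + y^2 = r^2) (hy : 0 < y) :
    2*(K*y) ≤ X^2 + y^2 + 1 := by
  have hA : 0 < c^2+r^2+1 := by positivity
  have he : ((c^2+r^2+1)*r)^2 - (2*r*K*y - 2*c*r*(X-c))^2
      = (2*c*r*y + 2*r*K*(X-c))^2 := by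
    linear_combination ((X-c)^2 + y^2) * hid - (c^2+r^2+1)^2 * hz
  have h2 : 2*r*K*y - 2*c*r*(X-c) ≤ (c^2+r^2+1)*r := by
    nlinarith [sq_nonneg (2*c*r*y + 2*r*K*(X-c)), mul_pos hA hr,
      sq_nonneg (2*r*K*y - 2*c*r*(X-c) + (c^2+r^2+1)*r)]
  nlinarith [h2, hz, hr, mul_pos hr hy]

/-- For every ρ > 0 and every real x ≥ 0 with x ≠ sinh ρ, setting
u = U_ρ(x) = (x·sinh ρ + 1)/(−x + sinh ρ), one has u ≠ x, and the geodesic γ(x, u)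
is tangent to the hyperbolic disc B_ρ(i). -/
theorem tangent_U (ρ : ℝ) (hρ : 0 < ρ) (x : ℝ) (hx : 0 ≤ x) (hxρ : x ≠ Real.sinh ρ) :
    (x * Real.sinh ρ + 1) / (-x + Real.sinh ρ) ≠ x ∧
      TangentToDisc x ((x * Real.sinh ρ + 1) / (-x + Real.sinh ρ)) ρ := by
  set s := Real.sinh ρ with hs_def
  have hs : 0 < s := Real.sinh_pos_iff.2 hρ
  have hd : -x + s ≠ 0 := fun h => hxρ (by rw [hs_def] at h ⊢; linarith)
  set u := (x * s + 1) / (-x + s) with hu_def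
  clear_value s u
  have hu2 : u * (-x + s) = x * s + 1 := by
    rw [hu_def]; field_simp
  have hxu : (x - u) * (-x + s) = -(x^2+1) := by
    linear_combination -hu2
  have hxu0 : x - u ≠ 0 := by
    intro h
    rw [h, zero_mul] at hxu
    nlinarith [sq_nonneg x]
  have hune : u ≠ x := fun h => hxu0 (by rw [h]; ring)
  refine ⟨hune, ?_⟩
  set K := Real.cosh ρ with hK_def
  have hK0 : 0 < K := by rw [hK_def]; exact Real.cosh_pos ρ
  have hK2 : K^2 = 1 + s^2 := by rw [hK_def, hs_def, Real.cosh_sq]; ring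
  clear_value K
  set c := (x + u) / 2 with hc_def
  set r := |x - u| / 2 with hr_def
  have hr0 : 0 < r := by rw [hr_def]; exact div_pos (abs_pos.2 hxu0) two_pos
  have hr2 : r^2 = (x-u)^2/4 := by
    rw [hr_def, div_pow, sq_abs]; norm_num
  clear_value c r
  have h1 : (x^2+1)*(u^2+1) = (x-u)^2*(1+s^2) := by
    have hD2 : (-x+s)^2 ≠ 0 := pow_ne_zero 2 hd
    have key : (x^2+1)*(u^2+1)*(-x+s)^2 = (x-u)^2*(1+s^2)*(-x+s)^2 := by
      linear_combination (x^2+1)*(u*(-x+s) + (x*s+1)) * hu2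
        - (1+s^2)*((x-u)*(-x+s) - (x^2+1)) * hxu
    exact mul_right_cancel₀ hD2 key
  have hid : (c^2+r^2+1)^2 - (2*c*r)^2 = (2*r*K)^2 := by
    rw [hc_def]
    linear_combination h1 - (x-u)^2 * hK2
      + (r^2 + (x-u)^2/4 + 2 - 2*((x+u)/2)^2 - 4*K^2) * hr2
  have hA : (0:ℝ) < c^2+r^2+1 := by positivity
  have hA2 : ((c^2+r^2+1)^2 : ℝ) ≠ 0 := pow_ne_zero 2 hA.ne'
  -- the tangency point
  set X0 : ℝ := c*(c^2-r^2+1)/(c^2+r^2+1) with hX0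
  set y0 : ℝ := 2*r^2*K/(c^2+r^2+1) with hy0def
  have hy0 : 0 < y0 := by rw [hy0def]; positivity
  have e1 : X0 * (c^2+r^2+1) = c*(c^2-r^2+1) := by
    rw [hX0]; field_simp
  have e2 : y0 * (c^2+r^2+1) = 2*r^2*K := by
    rw [hy0def]; field_simp
  clear_value X0 y0
  set z0 : ℍ := UpperHalfPlane.mk ⟨X0, y0⟩ hy0 with hz0
  have hz0c : (X0 - c)^2 + y0^2 = r^2 := by
    have G : ((X0-c)^2 + y0^2) * (c^2+r^2+1)^2 = r^2 * (c^2+r^2+1)^2 := by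
      linear_combination (X0*(c^2+r^2+1) + c*(c^2-r^2+1) - 2*c*(c^2+r^2+1)) * e1
        + (y0*(c^2+r^2+1) + 2*r^2*K) * e2 - r^2 * hid
    exact mul_right_cancel₀ hA2 G
  have hkey : X0^2 + y0^2 + 1 = 2*K*y0 := by
    have G : (X0^2 + y0^2 + 1) * (c^2+r^2+1)^2 = (2*K*y0) * (c^2+r^2+1)^2 := by
      linear_combination (X0*(c^2+r^2+1) + c*(c^2-r^2+1)) * e1
        + (y0*(c^2+r^2+1) + 2*r^2*K - 2*K*(c^2+r^2+1)) * e2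
        + (c^2+1) * hid
    exact mul_right_cancel₀ hA2 G
  have hgeo : ∀ z : ℍ, z ∈ geodesic x u ↔ ‖(z:ℂ) - ((c:ℝ):ℂ)‖ = r := by
    intro z
    rw [hc_def, hr_def]
    exact Iff.rfl
  have hz0mem : z0 ∈ geodesic x u := by
    rw [hgeo]
    show ‖((⟨X0, y0⟩ : ℂ)) - ((c : ℝ) : ℂ)‖ = r
    rw [Complex.norm_def, Complex.normSq_apply]
    have h1' : ((⟨X0, y0⟩ : ℂ) - ((c : ℝ) : ℂ)).re = X0 - c := by
      simp [Complex.sub_re]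
    have h2' : ((⟨X0, y0⟩ : ℂ) - ((c : ℝ) : ℂ)).im = y0 := by
      simp [Complex.sub_im]
    rw [h1', h2']
    rw [show (X0 - c) * (X0 - c) + y0 * y0 = r^2 by linear_combination hz0c]
    exact Real.sqrt_sq hr0.le
  -- general formula : cosh of distance to I for a point with coordinates X y
  have hcosh : ∀ z : ℍ, Real.cosh (dist z UpperHalfPlane.I)
      = 1 + ((z:ℂ).re^2 + ((z:ℂ).im - 1)^2) / (2 * (z:ℂ).im) := by
    intro z
    rw [UpperHalfPlane.cosh_dist]
    have hd2 : dist (z:ℂ) (UpperHalfPlane.I : ℂ) ^ 2 = (z:ℂ).re^2 + ((z:ℂ).im - 1)^2 := by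
      rw [Complex.dist_eq, Complex.sq_norm, Complex.normSq_apply]
      simp only [UpperHalfPlane.coe_I, Complex.sub_re, Complex.sub_im, Complex.I_re,
        Complex.I_im, sub_zero]
      ring
    rw [hd2, UpperHalfPlane.I_im, mul_one]
    rfl
  -- lower bound
  have hlb : ∀ z : ℍ, z ∈ geodesic x u → ρ ≤ dist z UpperHalfPlane.I := by
    intro z hz
    have hy : 0 < (z:ℂ).im := z.2
    have habs : ‖(z : ℂ) - ((c:ℝ):ℂ)‖ = r := (hgeo z).1 hz
    have hz2 : ((z:ℂ).re - c)^2 + (z:ℂ).im^2 = r^2 := by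
      have h := Complex.sq_norm ((z : ℂ) - ((c:ℝ):ℂ))
      rw [habs, Complex.normSq_apply] at h
      simp only [Complex.sub_re, Complex.sub_im, Complex.ofReal_re, Complex.ofReal_im,
        sub_zero] at h
      linear_combination -h
    have hineq : 2*(K*(z:ℂ).im) ≤ (z:ℂ).re^2 + (z:ℂ).im^2 + 1 :=
      aux_lower c r K _ _ hr0 hK0 hid hz2 hy
    have hcc : Real.cosh ρ ≤ Real.cosh (dist z UpperHalfPlane.I) := by
      rw [hcosh z, ← hK_def]
      have h3 : K - 1 ≤ ((z:ℂ).re^2 + ((z:ℂ).im - 1)^2) / (2 * (z:ℂ).im) := by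
        rw [le_div_iff₀ (by positivity)]
        nlinarith [hineq]
      linarith
    calc ρ = |ρ| := (abs_of_pos hρ).symm
      _ ≤ |dist z UpperHalfPlane.I| := Real.cosh_le_cosh.1 hcc
      _ = dist z UpperHalfPlane.I := abs_of_nonneg dist_nonneg
  -- the tangency point achieves distance ρ
  have hre : (z0:ℂ).re = X0 := rfl
  have him : (z0:ℂ).im = y0 := rfl
  have hc0 : Real.cosh (dist z0 UpperHalfPlane.I) = Real.cosh ρ := by
    rw [hcosh z0, hre, him, ← hK_def]
    field_simp
    linear_combination hkey
  have hdist0 : dist z0 UpperHalfPlane.I = ρ :=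
    Real.cosh_strictMonoOn.injOn (Set.mem_Ici.2 dist_nonneg) (Set.mem_Ici.2 hρ.le) hc0
  -- conclude
  have hmem : ρ ∈ (fun z : ℍ => dist z UpperHalfPlane.I) '' geodesic x u :=
    ⟨z0, hz0mem, hdist0⟩
  have hbdd : ∀ a ∈ (fun z : ℍ => dist z UpperHalfPlane.I) '' geodesic x u, ρ ≤ a := by
    rintro a ⟨z, hz, rfl⟩
    exact hlb z hz
  exact le_antisymm (csInf_le ⟨ρ, hbdd⟩ hmem) (le_csInf ⟨ρ, hmem⟩ hbdd)
end

section
/- For every ρ > 0 and every real x ≤ 0, setting w = −W_ρ(−x) = −((−x)·sinh ρ − 1)/((−x) + sinh ρ), one has w > x, and the geodesic γ(x, w) with ideal endpoints x and w is tangent to the hyperbolic disc B_ρ(i); that is, inf_{z ∈ γ(x,w)} dist(z, i) = ρ. -/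
open UpperHalfPlane MeasureTheory

lemma cosh_dist_I (z : ℍ) :
    Real.cosh (dist z UpperHalfPlane.I) = ((z:ℂ).re^2 + (z:ℂ).im^2 + 1) / (2 * (z:ℂ).im) := by
  rw [UpperHalfPlane.cosh_dist, UpperHalfPlane.I_im]
  have hd : dist (z:ℂ) ((UpperHalfPlane.I : ℍ):ℂ) ^ 2 = (z:ℂ).re^2 + ((z:ℂ).im - 1)^2 := by
    rw [Complex.dist_eq, Complex.sq_norm, Complex.normSq_apply]
    simp [UpperHalfPlane.coe_I]
    ring
  rw [hd]
  have hv : (0:ℝ) < (z:ℂ).im := z.2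
  have : UpperHalfPlane.im z = (z:ℂ).im := rfl
  rw [this]
  field_simp
  ring

lemma mem_geodesic_iff {a b : ℝ} (hab : a < b) (z : ℍ) :
    z ∈ geodesic a b ↔ ((z:ℂ).re - (a+b)/2)^2 + (z:ℂ).im^2 = ((b-a)/2)^2 := by
  have hr : (0:ℝ) ≤ (b - a)/2 := by linarith
  have habs : |a - b| = b - a := by rw [abs_sub_comm]; exact abs_of_nonneg (by linarith)
  rw [geodesic, Set.mem_setOf_eq, habs]
  rw [← sq_eq_sq₀ (norm_nonneg _) hr, Complex.sq_norm, Complex.normSq_apply]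
  simp only [Complex.sub_re, Complex.sub_im, Complex.ofReal_re, Complex.ofReal_im, sub_zero]
  constructor <;> intro h <;> linear_combination h

lemma tangent_general {x w ρ : ℝ} (hρ : 0 < ρ) (hxw : x < w)
    (hK : (x^2+1)*(w^2+1) = Real.cosh ρ ^ 2 * (w-x)^2) : TangentToDisc x w ρ := by
  set C := Real.cosh ρ with hCdef
  have hC1 : 1 ≤ C := Real.one_le_cosh ρ
  have hC0 : 0 < C := by linarith
  set D := x^2+w^2+2 with hDdef
  have hD : (0:ℝ) < D := by rw [hDdef]; positivity
  have hwx : 0 < w - x := sub_pos.2 hxw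
  have key : (w-x)^2*((x+w)^2 + 4*C^2) = D^2 := by
    rw [hDdef]; linear_combination (-4 : ℝ)*hK
  have key2 : ((x+w)*(x*w+1))^2 + (C*(w-x)^2)^2 + D^2 = 2*C^2*(w-x)^2*D := by
    rw [hDdef]; linear_combination (2*(x^2+w^2+2) - (w-x)^2)*hK
  set u₀ : ℝ := (x+w)*(x*w+1)/D with hu₀
  set v₀ : ℝ := C*(w-x)^2/D with hv₀
  have hv₀pos : 0 < v₀ := div_pos (mul_pos hC0 (pow_pos hwx 2)) hD
  have him' : (0:ℝ) < ((u₀ : ℂ) + (v₀ : ℂ)*Complex.I).im := by simpa using hv₀pos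
  set z₀ : ℍ := UpperHalfPlane.mk ((u₀ : ℂ) + (v₀ : ℂ)*Complex.I) him' with hz₀def
  have hz₀re : (z₀:ℂ).re = u₀ := by rw [hz₀def, UpperHalfPlane.coe_mk]; simp
  have hz₀im : (z₀:ℂ).im = v₀ := by rw [hz₀def, UpperHalfPlane.coe_mk]; simp
  have hz₀mem : z₀ ∈ geodesic x w := by
    rw [mem_geodesic_iff hxw, hz₀re, hz₀im]
    calc (u₀ - (x+w)/2)^2 + v₀^2
        = ((w-x)^2*((x+w)^2 + 4*C^2)) * (w-x)^2/4 / D^2 := by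
          rw [hu₀, hv₀]; field_simp; ring
      _ = ((w-x)/2)^2 := by
          rw [key]; field_simp; ring
  have hlb : ∀ z ∈ geodesic x w, ρ ≤ dist z UpperHalfPlane.I := by
    intro z hz
    rw [mem_geodesic_iff hxw] at hz
    set u := (z:ℂ).re with hu
    set v := (z:ℂ).im with hv
    have hvpos : 0 < v := z.2
    have hcon : v^2 = (w - u)*(u - x) := by linear_combination hz
    have hP : (0:ℝ) < u^2+v^2+1 := by positivity
    have h1 : (u^2+v^2+1)*(w-x) = (w-u)*(x^2+1)+(u-x)*(w^2+1) := by
      linear_combination (w-x)*hcon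
    have e1 : (2*v*C*(w-x))^2 = 4*((w-u)*(u-x))*((x^2+1)*(w^2+1)) := by
      linear_combination 4*C^2*(w-x)^2*hcon - 4*(w-u)*(u-x)*hK
    have h2 : (2*v*C*(w-x))^2 ≤ ((u^2+v^2+1)*(w-x))^2 := by
      rw [h1, e1]
      have hdiff : ((w-u)*(x^2+1)+(u-x)*(w^2+1))^2
          - 4*((w-u)*(u-x))*((x^2+1)*(w^2+1))
          = ((w-u)*(x^2+1) - (u-x)*(w^2+1))^2 := by ring
      linarith [sq_nonneg ((w-u)*(x^2+1) - (u-x)*(w^2+1)), hdiff]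
    have hA : 0 ≤ 2*v*C*(w-x) :=
      mul_nonneg (mul_nonneg (mul_nonneg (by norm_num) hvpos.le) hC0.le) hwx.le
    have hB : 0 ≤ (u^2+v^2+1)*(w-x) := mul_nonneg hP.le hwx.le
    have h2' : 2*v*C*(w-x) ≤ (u^2+v^2+1)*(w-x) := by
      have := Real.sqrt_le_sqrt h2
      rwa [Real.sqrt_sq hA, Real.sqrt_sq hB] at this
    have h3 : 2*v*C ≤ u^2+v^2+1 := le_of_mul_le_mul_right h2' hwx
    have h4 : C ≤ Real.cosh (dist z UpperHalfPlane.I) := by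
      rw [cosh_dist_I, ← hu, ← hv, le_div_iff₀ (by positivity)]
      have hcomm : C*(2*v) = 2*v*C := by ring
      linarith [h3, hcomm]
    have h5 := Real.cosh_le_cosh.mp h4
    rwa [abs_of_pos hρ, abs_of_nonneg dist_nonneg] at h5
  have hz₀dist : dist z₀ UpperHalfPlane.I = ρ := by
    have hnum : u₀^2 + v₀^2 + 1 = 2*C^2*(w-x)^2/D := by
      calc u₀^2 + v₀^2 + 1
          = (((x+w)*(x*w+1))^2 + (C*(w-x)^2)^2 + D^2)/D^2 := by
            rw [hu₀, hv₀]; field_simp; try ring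
        _ = (2*C^2*(w-x)^2*D)/D^2 := by rw [key2]
        _ = 2*C^2*(w-x)^2/D := by
            rw [div_eq_div_iff (by positivity) hD.ne']; ring
    have hcosh : Real.cosh (dist z₀ UpperHalfPlane.I) = C := by
      rw [cosh_dist_I, hz₀re, hz₀im, hnum, hv₀]
      have hden : (0:ℝ) < 2*(C*(w-x)^2/D) := by
        have h := hv₀pos; rw [hv₀] at h; linarith
      rw [div_eq_iff hden.ne']
      field_simp
    exact Real.cosh_strictMonoOn.injOn (Set.mem_Ici.mpr dist_nonneg)
      (Set.mem_Ici.mpr hρ.le) hcosh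
  apply le_antisymm
  · exact csInf_le ⟨0, by rintro _ ⟨z, hz, rfl⟩; exact dist_nonneg⟩
      ⟨_, hz₀mem, hz₀dist⟩
  · exact le_csInf ⟨_, ⟨_, hz₀mem, rfl⟩⟩ (by rintro _ ⟨z, hz, rfl⟩; exact hlb z hz)


/-- For every ρ > 0 and every real x ≤ 0, setting
w = −W_ρ(−x) = −((−x)·sinh ρ − 1)/((−x) + sinh ρ), one has w > x, and the geodesic
γ(x, w) is tangent to the hyperbolic disc B_ρ(i). -/
theorem tangent_W_neg (ρ : ℝ) (hρ : 0 < ρ) (x : ℝ) (hx : x ≤ 0) :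
    x < -((-x * Real.sinh ρ - 1) / (-x + Real.sinh ρ)) ∧
      TangentToDisc x (-((-x * Real.sinh ρ - 1) / (-x + Real.sinh ρ))) ρ := by
  have hs0 : 0 < Real.sinh ρ := Real.sinh_pos_iff.2 hρ
  set s := Real.sinh ρ with hs
  have hsx : 0 < s - x := by linarith
  have hw : -((-x * s - 1) / (-x + s)) = (x*s+1)/(s-x) := by
    rw [show -x + s = s - x by ring, ← neg_div, show -(-x*s-1) = x*s+1 by ring]
  rw [hw]
  have hxw : x < (x*s+1)/(s-x) := by
    rw [lt_div_iff₀ hsx]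
    nlinarith [sq_nonneg x]
  refine ⟨hxw, tangent_general hρ hxw ?_⟩
  have hcosh2 : Real.cosh ρ ^ 2 = s^2 + 1 := by
    rw [hs]; linarith [Real.cosh_sq ρ]
  rw [hcosh2]
  field_simp
  ring
end

section
/- For every ρ > 0, every real x ≥ 0 with x ≠ sinh ρ, and every real y with y ≠ x, the geodesic γ(x,y) with ideal endpoints x and y is tangent to the hyperbolic disc B_ρ(i) (i.e. inf_{z ∈ γ(x,y)} dist(z, i) = ρ) if and only if y = W_ρ(x) or y = U_ρ(x). -/
set_option maxHeartbeats 1000000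

open UpperHalfPlane MeasureTheory

lemma dist_to_I (z : ℍ) : dist z UpperHalfPlane.I
    = 2 * Real.arsinh (Real.sqrt ((z.re^2 + (z.im - 1)^2)/(4*z.im))) := by
  rw [UpperHalfPlane.dist_eq]
  congr 2
  rw [UpperHalfPlane.I_im, mul_one, Complex.dist_eq]
  have h1 : ‖(z:ℂ) - (UpperHalfPlane.I : ℍ)‖ = Real.sqrt (z.re^2 + (z.im-1)^2) := by
    rw [Complex.norm_def, Complex.normSq_apply]
    congr 1
    simp [UpperHalfPlane.coe_I, Complex.sub_re, Complex.sub_im, UpperHalfPlane.coe_re,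
      UpperHalfPlane.coe_im]
    ring
  rw [h1, Real.sqrt_div (by positivity), Real.sqrt_mul (by norm_num : (0:ℝ) ≤ 4),
    show Real.sqrt 4 = 2 by
      rw [show (4:ℝ) = 2^2 by norm_num, Real.sqrt_sq (by norm_num : (0:ℝ) ≤ 2)]]

lemma mem_geodesic_iff_s6 (x y : ℝ) (hy : y ≠ x) (z : ℍ) :
    z ∈ geodesic x y ↔ (z.re - (x+y)/2) ^ 2 + z.im ^ 2 = (|x-y|/2) ^ 2 := by
  have hr : (0:ℝ) < |x-y|/2 := by
    have : x - y ≠ 0 := sub_ne_zero.mpr fun h => hy (by linarith)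
    positivity
  simp only [geodesic, Set.mem_setOf_eq]
  have habs : ‖(z : ℂ) - (((x + y) / 2 : ℝ) : ℂ)‖
      = Real.sqrt ((z.re - (x+y)/2) ^ 2 + z.im ^ 2) := by
    rw [Complex.norm_def, Complex.normSq_apply]
    congr 1
    simp [Complex.sub_re, Complex.sub_im, UpperHalfPlane.coe_re, UpperHalfPlane.coe_im]
    ring
  rw [habs]
  constructor
  · intro h
    have h2 := congrArg (· ^ 2) h
    simpa [Real.sq_sqrt (by positivity : (0:ℝ) ≤ (z.re - (x+y)/2) ^ 2 + z.im ^ 2)] using h2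
  · intro h
    rw [h, Real.sqrt_sq hr.le]

/-- For every ρ > 0, every real x ≥ 0 with x ≠ sinh ρ, and every real y ≠ x, the geodesic
γ(x,y) is tangent to B_ρ(i) iff y = W_ρ(x) or y = U_ρ(x). -/
theorem tangent_iff (ρ : ℝ) (hρ : 0 < ρ) (x : ℝ) (hx : 0 ≤ x) (hxρ : x ≠ Real.sinh ρ)
    (y : ℝ) (hy : y ≠ x) :
    TangentToDisc x y ρ ↔
      y = (x * Real.sinh ρ - 1) / (x + Real.sinh ρ) ∨
        y = (x * Real.sinh ρ + 1) / (-x + Real.sinh ρ) := by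
  set s := Real.sinh ρ with hs
  have hspos : 0 < s := Real.sinh_pos_iff.mpr hρ
  set c : ℝ := (x + y) / 2 with hc
  set r : ℝ := |x - y| / 2 with hrdef
  have hrpos : 0 < r := by
    have : x - y ≠ 0 := sub_ne_zero.mpr fun h => hy (by linarith)
    rw [hrdef]; positivity
  have hr2 : r ^ 2 = (x - y) ^ 2 / 4 := by
    rw [hrdef, div_pow, sq_abs]; norm_num
  set A : ℝ := c ^ 2 + r ^ 2 + 1 with hAdef
  set E : ℝ := (x ^ 2 + 1) * (y ^ 2 + 1) with hEdef
  have hAB : A ^ 2 - 4 * c ^ 2 * r ^ 2 = E := by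
    rw [hAdef, hEdef, hc, hr2]; ring
  have hEpos : 0 < E := by rw [hEdef]; positivity
  have hApos : 0 < A := by positivity
  set SE : ℝ := Real.sqrt E with hSEdef
  have hSEpos : 0 < SE := Real.sqrt_pos.mpr hEpos
  have hSE2 : SE ^ 2 = E := Real.sq_sqrt hEpos.le
  have hE4r : 4 * r ^ 2 ≤ E := by
    rw [hEdef, hr2]; nlinarith [sq_nonneg (x*y+1)]
  have hSEr : 2 * r ≤ SE := by
    nlinarith [hSE2, hSEpos.le, hrpos.le]
  set T : ℝ := (SE - 2*r)/(4*r) with hTdef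
  have hT : 0 ≤ T := by
    apply div_nonneg (by linarith) (by linarith)
  have hTr : T * (4*r) = SE - 2*r := by
    rw [hTdef]; field_simp
  set D : ℝ := 2 * Real.arsinh (Real.sqrt T) with hDdef
  have hSE2AB : SE^2 = A^2 - 4*c^2*r^2 := by rw [hSE2, ← hAB]
  -- lower bound
  have key : ∀ u v : ℝ, 0 < v → u^2 + v^2 = r^2 → v * SE ≤ r * (A + 2*c*u) := by
    intro u v hv huv
    have hu2 : u^2 ≤ r^2 := by nlinarith [sq_nonneg v]
    have h1 : 0 ≤ A + 2*c*u := by nlinarith [sq_nonneg (c+u)]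
    have heq : (r*(A+2*c*u))^2 - (v*SE)^2 = (A*u + 2*c*r^2)^2 := by
      linear_combination (-(v^2)) * hSE2AB + (4*c^2*r^2 - A^2) * huv
    have h2 : (v*SE)^2 ≤ (r*(A+2*c*u))^2 := by
      linarith [sq_nonneg (A*u + 2*c*r^2)]
    have h3 := Real.sqrt_le_sqrt h2
    rwa [Real.sqrt_sq (by positivity), Real.sqrt_sq (by positivity)] at h3
  have hge : ∀ z ∈ geodesic x y, D ≤ dist z UpperHalfPlane.I := by
    intro z hz
    rw [mem_geodesic_iff_s6 x y hy z] at hz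
    have hz' : (z.re - c)^2 + z.im^2 = r^2 := by rw [hrdef]; exact hz
    have hv : 0 < z.im := z.im_pos
    have hk := key (z.re - c) z.im hv hz'
    rw [dist_to_I z, hDdef]
    have hqT : T ≤ (z.re^2 + (z.im - 1)^2)/(4*z.im) := by
      rw [le_div_iff₀ (by positivity : (0:ℝ) < 4*z.im)]
      have hmul : T*(4*z.im)*r ≤ (z.re^2 + (z.im-1)^2)*r := by
        calc T*(4*z.im)*r = (SE - 2*r)*z.im := by
              rw [show T*(4*z.im)*r = T*(4*r)*z.im by ring, hTr]
          _ ≤ r*(A + 2*c*(z.re - c)) - 2*r*z.im := by linarith [hk]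
          _ = (z.re^2 + (z.im-1)^2)*r := by linear_combination (-r) * hz'
      exact le_of_mul_le_mul_right hmul hrpos
    have h6 := Real.sqrt_le_sqrt hqT
    have h7 := Real.arsinh_le_arsinh.mpr h6
    linarith
  -- the tangency point
  set u0 : ℝ := -2*c*r^2/A with hu0
  set v0 : ℝ := r*SE/A with hv0
  have hv0pos : 0 < v0 := by rw [hv0]; positivity
  set z0 : ℍ := ⟨⟨c + u0, v0⟩, hv0pos⟩ with hz0
  have hz0re : z0.re = c + u0 := rfl
  have hz0im : z0.im = v0 := rfl
  have hz0mem : z0 ∈ geodesic x y := by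
    rw [mem_geodesic_iff_s6 x y hy, hz0re, hz0im, ← hc, ← hrdef]
    rw [hu0, hv0]
    field_simp
    linear_combination r^2 * hSE2AB
  have hz0q : (z0.re^2 + (z0.im - 1)^2)/(4*z0.im) = T := by
    rw [hz0re, hz0im, hu0, hv0, hTdef]
    have hne : A ≠ 0 := hApos.ne'
    field_simp
    linear_combination (r^2 - A) * hSE2AB - A^2 * hAdef
  have hz0dist : dist z0 UpperHalfPlane.I = D := by
    rw [dist_to_I z0, hz0q, hDdef]
  -- sInf = D
  have hDmem : D ∈ (fun z : ℍ => dist z UpperHalfPlane.I) '' geodesic x y :=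
    ⟨z0, hz0mem, hz0dist⟩
  have hlb : ∀ a ∈ (fun z : ℍ => dist z UpperHalfPlane.I) '' geodesic x y, D ≤ a := by
    rintro a ⟨z, hz, rfl⟩; exact hge z hz
  have hsinf : sInf ((fun z : ℍ => dist z UpperHalfPlane.I) '' geodesic x y) = D :=
    le_antisymm (csInf_le ⟨D, hlb⟩ hDmem) (le_csInf ⟨D, hDmem⟩ hlb)
  have hTD : TangentToDisc x y ρ ↔ D = ρ := by
    unfold TangentToDisc
    rw [hsinf]
  rw [hTD]
  -- translate D = ρ into algebra
  have hsh : 0 < Real.sinh (ρ/2) := Real.sinh_pos_iff.mpr (by linarith)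
  have hcosh : Real.cosh ρ = 2 * Real.sinh (ρ/2)^2 + 1 := by
    rw [show ρ = 2*(ρ/2) by ring, Real.cosh_two_mul, Real.cosh_sq]; ring
  have hcoshpos : 0 < Real.cosh ρ := Real.cosh_pos ρ
  have step1 : D = ρ ↔ Real.sqrt T = Real.sinh (ρ/2) := by
    rw [hDdef]
    constructor
    · intro h
      have : Real.arsinh (Real.sqrt T) = ρ/2 := by linarith
      rw [← this, Real.sinh_arsinh]
    · intro h
      rw [h, Real.arsinh_sinh]; ring
  have step2 : Real.sqrt T = Real.sinh (ρ/2) ↔ T = Real.sinh (ρ/2)^2 := by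
    constructor
    · intro h; rw [← Real.sq_sqrt hT, h]
    · intro h; rw [h, Real.sqrt_sq hsh.le]
  have step3 : T = Real.sinh (ρ/2)^2 ↔ SE = 2*r*Real.cosh ρ := by
    rw [hTdef, hcosh]
    rw [div_eq_iff (by positivity : (4:ℝ)*r ≠ 0)]
    constructor <;> intro h <;> linarith [h]
  have step4 : SE = 2*r*Real.cosh ρ ↔ E = 4*r^2*Real.cosh ρ^2 := by
    constructor
    · intro h; rw [← hSE2, h]; ring
    · intro h
      rw [hSEdef, h, show (4:ℝ)*r^2*Real.cosh ρ^2 = (2*r*Real.cosh ρ)^2 by ring,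
        Real.sqrt_sq (by positivity)]
  have hcosh2 : Real.cosh ρ^2 = 1 + s^2 := by rw [Real.cosh_sq, hs]; ring
  have step5 : E = 4*r^2*Real.cosh ρ^2 ↔ (x*y+1)^2 = s^2*(x-y)^2 := by
    rw [hcosh2, hEdef, hr2]
    constructor <;> intro h <;> linear_combination h
  have hxs : x + s ≠ 0 := by positivity
  have hxs2 : x - s ≠ 0 := sub_ne_zero.mpr hxρ
  have step6 : (x*y+1)^2 = s^2*(x-y)^2 ↔
      y = (x * s - 1) / (x + s) ∨ y = (x * s + 1) / (-x + s) := by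
    have hfac : (x*y+1)^2 - s^2*(x-y)^2 = (y*(x+s) - (x*s-1)) * (y*(x-s) + (x*s+1)) := by
      ring
    constructor
    · intro h
      have : (y*(x+s) - (x*s-1)) * (y*(x-s) + (x*s+1)) = 0 := by linarith [hfac]
      rcases mul_eq_zero.mp this with h1 | h1
      · left
        rw [eq_div_iff hxs]; linarith
      · right
        have hne : (-x + s) ≠ 0 := fun h2 => hxs2 (by linarith)
        rw [eq_div_iff hne]; linarith [h1]
    · rintro (h | h)
      · rw [eq_div_iff hxs] at h
        linear_combination (y*(x-s) + (x*s+1)) * h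
      · have hne : (-x + s) ≠ 0 := fun h2 => hxs2 (by linarith)
        rw [eq_div_iff hne] at h
        linear_combination (-(y*(x+s) - (x*s-1))) * h
  rw [step1, step2, step3, step4, step5, step6]
end

section
/- For every r > 0, every real x > sinh r, and every real y with y ≠ x, the geodesic γ(x,y) with ideal endpoints x and y intersects the closed hyperbolic disc B̄_r(i) if and only if U_r(x) ≤ y ≤ W_r(x); in particular for such x the set of such y is a bounded interval. -/
open UpperHalfPlane MeasureTheory

/-- Quadratic inequality characterisation of the interval `[U_r(x), W_r(x)]`. -/
theorem alg_iff_aux (s x y : ℝ) (hs : 0 < s) (hsx : s < x) :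
    (x^2+1)*(y^2+1) ≤ (x-y)^2*(1+s^2) ↔
      0 ≤ ((x-s)*y + (x*s+1)) ∧ 0 ≤ ((x*s-1) - (x+s)*y) := by
  have hid : (x-y)^2*(1+s^2) - (x^2+1)*(y^2+1)
      = ((x-s)*y + (x*s+1)) * ((x*s-1) - (x+s)*y) := by ring
  set P := (x-s)*y + (x*s+1) with hPdef
  set Q := (x*s-1) - (x+s)*y with hQdef
  have hsum : P*(x+s) + Q*(x-s) = 2*s*(x^2+1) := by rw [hPdef, hQdef]; ring
  have hx2 : 0 < 2*s*(x^2+1) := by positivity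
  have hxs1 : 0 < x - s := by linarith
  have hxs2 : 0 < x + s := by linarith
  constructor
  · intro h
    have hPQ : 0 ≤ P * Q := by linarith [hid]
    have hP : 0 ≤ P := by
      by_contra hP
      push_neg at hP
      have hQpos : 0 < Q := by nlinarith
      nlinarith [mul_pos hQpos (neg_pos.mpr hP)]
    refine ⟨hP, ?_⟩
    by_contra hQ
    push_neg at hQ
    have hP0 : P = 0 := by
      refine le_antisymm ?_ hP
      by_contra hPpos
      push_neg at hPpos
      exact absurd hPQ (not_le.mpr (mul_neg_of_pos_of_neg hPpos hQ))
    rw [hP0] at hsum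
    nlinarith [mul_neg_of_neg_of_pos hQ hxs1]
  · rintro ⟨hP, hQ⟩
    nlinarith [mul_nonneg hP hQ]

theorem fwd_alg_aux (c u v R2 K D : ℝ) (hv : 0 < v) (huv : u^2+v^2 = R2)
    (hDA : D = (c^2+R2+1)^2 - 4*c^2*R2)
    (hS : c^2+R2+1+2*c*u ≤ 2*v*K) : D ≤ 4*R2*K^2 := by
  have hSpos : 0 < c^2+R2+1+2*c*u := by nlinarith [sq_nonneg (c+u), sq_nonneg v]
  have heq : R2*(c^2+R2+1+2*c*u)^2 - v^2*D = (u*(c^2+R2+1)+2*c*R2)^2 := by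
    linear_combination (u^2 - R2) * hDA - D * huv
  have hR2nn : (0:ℝ) ≤ R2 := by nlinarith [sq_nonneg u, sq_nonneg v]
  have hS2 : (c^2+R2+1+2*c*u)^2 ≤ (2*v*K)^2 := by
    apply pow_le_pow_left₀ hSpos.le hS
  have hfin : v^2*D ≤ v^2*(4*R2*K^2) := by
    nlinarith [heq, sq_nonneg (u*(c^2+R2+1)+2*c*R2), mul_le_mul_of_nonneg_left hS2 hR2nn]
  exact le_of_mul_le_mul_left hfin (by positivity)

theorem geo_fwd_aux (r x y : ℝ) (hr : 0 < r) (h : MeetsClosedDisc x y r) :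
    (x^2+1)*(y^2+1) ≤ (x-y)^2 * (Real.cosh r)^2 := by
  obtain ⟨z, hz, hd⟩ := h
  have hv : 0 < z.im := z.im_pos
  have habs : ‖(z : ℂ) - (((x+y)/2 : ℝ) : ℂ)‖ = |x - y| / 2 := hz
  set c : ℝ := (x+y)/2 with hc
  set v : ℝ := z.im with hvdef
  set u : ℝ := (z:ℂ).re - c with hu
  have huv : u^2 + v^2 = (x-y)^2/4 := by
    have h2 : (‖(z : ℂ) - (c : ℂ)‖)^2 = (|x-y|/2)^2 := by rw [habs]
    rw [Complex.sq_norm, Complex.normSq_apply] at h2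
    simp only [Complex.sub_re, Complex.sub_im, Complex.ofReal_re, Complex.ofReal_im] at h2
    rw [div_pow, sq_abs, UpperHalfPlane.coe_im] at h2
    rw [hu, hvdef]
    nlinarith [h2]
  clear_value c v u
  have hcd : Real.cosh (dist z UpperHalfPlane.I) = 1 + ((c+u)^2 + (v-1)^2)/(2*v) := by
    rw [UpperHalfPlane.cosh_dist]
    have hIim : (UpperHalfPlane.I : ℍ).im = 1 := rfl
    rw [hIim]
    have hd2 : dist (z:ℂ) ((UpperHalfPlane.I : ℍ) : ℂ) ^ 2 = (c+u)^2 + (v-1)^2 := by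
      rw [Complex.dist_eq, Complex.sq_norm, Complex.normSq_apply]
      have hI : ((UpperHalfPlane.I : ℍ) : ℂ) = Complex.I := rfl
      rw [hI]
      simp only [Complex.sub_re, Complex.sub_im, Complex.I_re, Complex.I_im]
      have hre : (z:ℂ).re = c + u := by rw [hu]; ring
      have him : (z:ℂ).im = v := by rw [hvdef, UpperHalfPlane.coe_im]
      rw [hre, him]; ring
    rw [hd2, ← hvdef]
    ring_nf
  have hcosh_le : Real.cosh (dist z UpperHalfPlane.I) ≤ Real.cosh r := by
    rw [Real.cosh_le_cosh, abs_of_nonneg dist_nonneg, abs_of_pos hr]; exact hd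
  rw [hcd] at hcosh_le
  have hK1 : (1:ℝ) ≤ Real.cosh r := Real.one_le_cosh r
  have hS : c^2 + (x-y)^2/4 + 1 + 2*c*u ≤ 2*v*(Real.cosh r) := by
    have h3 : ((c+u)^2 + (v-1)^2)/(2*v) ≤ Real.cosh r - 1 := by linarith
    rw [div_le_iff₀ (by linarith : (0:ℝ) < 2*v)] at h3
    nlinarith [h3, huv]
  have hDA : (x^2+1)*(y^2+1) = (c^2+((x-y)^2/4)+1)^2 - 4*c^2*((x-y)^2/4) := by
    rw [hc]; ring
  have := fwd_alg_aux c u v ((x-y)^2/4) (Real.cosh r) ((x^2+1)*(y^2+1)) hv huv hDA hS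
  linarith

theorem geo_bwd_aux (r x y : ℝ) (hr : 0 < r) (hy : y ≠ x)
    (h : (x^2+1)*(y^2+1) ≤ (x-y)^2 * (Real.cosh r)^2) : MeetsClosedDisc x y r := by
  have hxy : x - y ≠ 0 := fun hxy => hy (by linarith [hxy])
  set R : ℝ := |x - y| / 2 with hRdef
  have hR : 0 < R := by positivity
  have hR2 : R^2 = (x-y)^2/4 := by rw [hRdef, div_pow, sq_abs]; norm_num
  set c : ℝ := (x+y)/2 with hc
  set A : ℝ := c^2 + R^2 + 1 with hA
  have hApos : 0 < A := by positivity
  set D : ℝ := (x^2+1)*(y^2+1) with hD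
  have hDpos : 0 < D := by positivity
  have hDA : D = A^2 - 4*c^2*R^2 := by rw [hD, hA, hR2, hc]; ring
  set sD : ℝ := Real.sqrt D with hsD
  have hsD2 : sD^2 = D := Real.sq_sqrt hDpos.le
  have hsDpos : 0 < sD := Real.sqrt_pos.mpr hDpos
  set K : ℝ := Real.cosh r with hK
  have hK1 : (1:ℝ) ≤ K := Real.one_le_cosh r
  set u0 : ℝ := -2*c*R^2/A with hu0
  set v0 : ℝ := R*sD/A with hv0
  have hv0pos : 0 < v0 := by rw [hv0]; positivity
  have hAne : A ≠ 0 := ne_of_gt hApos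
  clear_value R c A D sD K u0 v0
  have huv : u0^2 + v0^2 = R^2 := by
    rw [hu0, hv0]
    field_simp
    linear_combination hsD2 + hDA
  have hAu : A + 2*c*u0 = D/A := by
    rw [hu0]
    field_simp
    linear_combination (-1:ℝ)*hDA
  have hsD_le : sD ≤ 2*R*K := by
    have h4 : D ≤ (2*R*K)^2 := by rw [hD] at *; nlinarith [hR2, h]
    calc sD = Real.sqrt D := hsD
      _ ≤ Real.sqrt ((2*R*K)^2) := Real.sqrt_le_sqrt h4
      _ = 2*R*K := Real.sqrt_sq (by positivity)
  set z : ℍ := ⟨⟨c + u0, v0⟩, hv0pos⟩ with hz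
  have hzre : (z:ℂ).re = c + u0 := rfl
  have hzim : z.im = v0 := rfl
  have hzim' : (z:ℂ).im = v0 := rfl
  clear_value z
  refine ⟨z, ?_, ?_⟩
  · show ‖(z:ℂ) - (((x+y)/2 : ℝ) : ℂ)‖ = |x - y| / 2
    rw [Complex.norm_def, Complex.normSq_apply]
    simp only [Complex.sub_re, Complex.sub_im, Complex.ofReal_re, Complex.ofReal_im]
    rw [hzre, hzim', ← hc, ← hRdef]
    have heq : (c + u0 - c) * (c + u0 - c) + (v0 - 0) * (v0 - 0) = R^2 := by
      rw [← huv]; ring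
    rw [heq, Real.sqrt_sq hR.le]
  · have hcd : Real.cosh (dist z UpperHalfPlane.I)
        = 1 + ((c+u0)^2 + (v0-1)^2)/(2*v0) := by
      rw [UpperHalfPlane.cosh_dist]
      have hIim : (UpperHalfPlane.I : ℍ).im = 1 := rfl
      rw [hIim]
      have hd2 : dist (z : ℂ) ((UpperHalfPlane.I : ℍ) : ℂ) ^ 2
          = (c+u0)^2 + (v0-1)^2 := by
        rw [Complex.dist_eq, Complex.sq_norm, Complex.normSq_apply]
        have hI : ((UpperHalfPlane.I : ℍ) : ℂ) = Complex.I := rfl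
        rw [hI]
        simp only [Complex.sub_re, Complex.sub_im, Complex.I_re, Complex.I_im]
        rw [hzre, hzim']; ring
      rw [hd2, hzim]
      ring_nf
    have hNum : (c+u0)^2 + (v0-1)^2 + 2*v0 = A + 2*c*u0 := by
      linear_combination huv - hA
    have hDle : D ≤ 2*R*sD*K := by
      nlinarith [mul_le_mul_of_nonneg_left hsD_le hsDpos.le, hsD2]
    have hAle : D/A ≤ 2*v0*K := by
      rw [hv0, div_le_iff₀ hApos]
      have heq2 : 2*(R*sD/A)*K*A = 2*R*sD*K := by
        calc 2*(R*sD/A)*K*A = 2*((R*sD/A)*A)*K := by ring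
          _ = 2*(R*sD)*K := by rw [div_mul_cancel₀ _ hAne]
          _ = 2*R*sD*K := by ring
      rw [heq2]; exact hDle
    have hkey : (c+u0)^2 + (v0-1)^2 ≤ (K-1)*(2*v0) := by
      have : A + 2*c*u0 ≤ 2*v0*K := by rw [hAu]; exact hAle
      linarith
    have hcosh_le : Real.cosh (dist z UpperHalfPlane.I) ≤ K := by
      rw [hcd]
      have := (div_le_iff₀ (by linarith : (0:ℝ) < 2*v0)).mpr hkey
      linarith
    rw [hK] at hcosh_le
    have hfin := Real.cosh_le_cosh.mp hcosh_le
    rwa [abs_of_nonneg dist_nonneg, abs_of_pos hr] at hfin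

/-- For every r > 0, every real x > sinh r, and every real y ≠ x, the geodesic γ(x,y)
intersects the closed disc B̄_r(i) iff U_r(x) ≤ y ≤ W_r(x). -/
theorem meets_iff_of_sinh_lt (r : ℝ) (hr : 0 < r) (x : ℝ) (hx : Real.sinh r < x)
    (y : ℝ) (hy : y ≠ x) :
    MeetsClosedDisc x y r ↔
      (x * Real.sinh r + 1) / (-x + Real.sinh r) ≤ y ∧
        y ≤ (x * Real.sinh r - 1) / (x + Real.sinh r) := by
  set s : ℝ := Real.sinh r with hs
  have hspos : 0 < s := by rw [hs]; exact Real.sinh_pos_iff.mpr hr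
  have hsx : s < x := hx
  have hcosh2 : (Real.cosh r)^2 = 1 + s^2 := by rw [Real.cosh_sq, hs]; ring
  clear_value s
  have hmeet : MeetsClosedDisc x y r ↔ (x^2+1)*(y^2+1) ≤ (x-y)^2*(1+s^2) := by
    rw [← hcosh2]
    exact ⟨fun h => geo_fwd_aux r x y hr h, fun h => geo_bwd_aux r x y hr hy h⟩
  rw [hmeet, alg_iff_aux s x y hspos hsx]
  have hneg : -x + s < 0 := by linarith
  have hpos2 : 0 < x + s := by linarith
  rw [div_le_iff_of_neg hneg, le_div_iff₀ hpos2]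
  constructor
  · rintro ⟨h1, h2⟩
    constructor <;> nlinarith
  · rintro ⟨h1, h2⟩
    constructor <;> nlinarith
end

section
/- For every r > 0, every real x with 0 ≤ x < sinh r, and every real y with y ≠ x, the geodesic γ(x,y) with ideal endpoints x and y intersects the closed hyperbolic disc B̄_r(i) if and only if y ≤ W_r(x) or y ≥ U_r(x); in particular for such x the set of such y is the complement of the bounded open interval (W_r(x), U_r(x)). -/
open UpperHalfPlane MeasureTheory

private lemma alg_iff (s x y : ℝ) (hs0 : 0 < s) (hx0 : 0 ≤ x) (hx : x < s) (hy : y ≠ x) :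
    x * y + 1 ≤ s * |x - y| ↔
      y ≤ (x * s - 1) / (x + s) ∨ (x * s + 1) / (-x + s) ≤ y := by
  rcases lt_or_gt_of_ne hy with h | h
  · rw [abs_of_pos (by linarith : (0:ℝ) < x - y)]
    constructor
    · intro hle
      left
      rw [le_div_iff₀ (by linarith : (0:ℝ) < x + s)]
      nlinarith
    · rintro (hle | hge)
      · rw [le_div_iff₀ (by linarith : (0:ℝ) < x + s)] at hle
        nlinarith
      · exfalso
        rw [div_le_iff₀ (by linarith : (0:ℝ) < -x + s)] at hge
        nlinarith [mul_pos (sub_pos.2 h) (sub_pos.2 hx), sq_nonneg x]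
  · rw [abs_of_neg (by linarith : x - y < 0)]
    constructor
    · intro hle
      right
      rw [div_le_iff₀ (by linarith : (0:ℝ) < -x + s)]
      nlinarith
    · rintro (hle | hge)
      · exfalso
        rw [le_div_iff₀ (by linarith : (0:ℝ) < x + s)] at hle
        nlinarith [mul_pos (sub_pos.2 h) (show (0:ℝ) < x + s by linarith), sq_nonneg x]
      · rw [div_le_iff₀ (by linarith : (0:ℝ) < -x + s)] at hge
        nlinarith


private lemma hid_aux (c ch d R : ℝ) (hd : d ≠ 0) :
    (c : ℂ) + ((R / d : ℝ) : ℂ) * ((ch : ℂ) * Complex.I - (c : ℂ)) - (ch : ℂ) * Complex.I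
      = (((d - R) / d : ℝ) : ℂ) * ((c : ℂ) - (ch : ℂ) * Complex.I) := by
  have h : (d : ℂ) ≠ 0 := by exact_mod_cast hd
  push_cast
  field_simp
  ring

private lemma him_aux (c ch d R : ℝ) :
    ((c : ℂ) + ((R / d : ℝ) : ℂ) * ((ch : ℂ) * Complex.I - (c : ℂ))).im = R / d * ch := by
  simp

/-- For every r > 0, every real x with 0 ≤ x < sinh r, and every real y ≠ x, the geodesic
γ(x,y) intersects the closed disc B̄_r(i) iff y ≤ W_r(x) or y ≥ U_r(x). -/
theorem meets_iff_of_lt_sinh (r : ℝ) (hr : 0 < r) (x : ℝ) (hx0 : 0 ≤ x)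
    (hx : x < Real.sinh r) (y : ℝ) (hy : y ≠ x) :
    MeetsClosedDisc x y r ↔
      y ≤ (x * Real.sinh r - 1) / (x + Real.sinh r) ∨
        (x * Real.sinh r + 1) / (-x + Real.sinh r) ≤ y := by
  set s := Real.sinh r with hs
  have hs0 : 0 < s := by rw [hs]; exact Real.sinh_pos_iff.2 hr
  set ch := Real.cosh r with hch
  have hch0 : 0 < ch := by rw [hch]; exact Real.cosh_pos r
  have hch2 : ch ^ 2 = s ^ 2 + 1 := by rw [hs, hch, Real.cosh_sq]
  set c : ℝ := (x + y) / 2 with hc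
  set R : ℝ := |x - y| / 2 with hR
  have hR0 : 0 < R := by
    have h1 : x - y ≠ 0 := sub_ne_zero.2 (Ne.symm hy)
    have := abs_pos.2 h1
    rw [hR]; positivity
  have hRsq : R ^ 2 = (x - y) ^ 2 / 4 := by rw [hR, div_pow, sq_abs]; norm_num
  have hcsq : c ^ 2 = (x + y) ^ 2 / 4 := by rw [hc]; ring
  have h2R : |x - y| = 2 * R := by rw [hR]; ring
  have hcent : ((UpperHalfPlane.I.center r : ℍ) : ℂ) = (ch : ℂ) * Complex.I := by
    apply Complex.ext <;>
      simp [UpperHalfPlane.coe_re, UpperHalfPlane.coe_im, UpperHalfPlane.I_re,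
        UpperHalfPlane.I_im, hch]
  have habs : ‖(c : ℂ) - (ch : ℂ) * Complex.I‖ = Real.sqrt (c ^ 2 + ch ^ 2) := by
    rw [Complex.norm_def, Complex.normSq_apply]
    simp
    congr 1
    ring
  have key : MeetsClosedDisc x y r ↔ x * y + 1 ≤ s * |x - y| := by
    constructor
    · rintro ⟨z, hz, hd⟩
      rw [UpperHalfPlane.dist_le_iff_dist_coe_center_le, hcent, UpperHalfPlane.I_im,
        one_mul] at hd
      have hz' : ‖(z : ℂ) - (c : ℂ)‖ = R := hz
      have htri : dist (c : ℂ) ((ch : ℂ) * Complex.I) ≤ R + s := by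
        calc dist (c : ℂ) ((ch : ℂ) * Complex.I)
            ≤ dist (c : ℂ) (z : ℂ) + dist (z : ℂ) ((ch : ℂ) * Complex.I) :=
              dist_triangle _ _ _
          _ ≤ R + s := by
              refine add_le_add (le_of_eq ?_) hd
              rw [Complex.dist_eq, norm_sub_rev]
              exact hz'
      rw [Complex.dist_eq, habs] at htri
      have hsq : c ^ 2 + ch ^ 2 ≤ (R + s) ^ 2 := by
        have h1 := Real.sq_sqrt (show (0:ℝ) ≤ c ^ 2 + ch ^ 2 by positivity)
        nlinarith [Real.sqrt_nonneg (c ^ 2 + ch ^ 2)]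
      rw [h2R]
      nlinarith [hsq, hch2, hRsq, hcsq]
    · intro h
      set d : ℝ := Real.sqrt (c ^ 2 + ch ^ 2) with hd
      have hd2 : d ^ 2 = c ^ 2 + ch ^ 2 := Real.sq_sqrt (by positivity)
      have hd0 : 0 < d := Real.sqrt_pos.2 (by positivity)
      have hdle : d ≤ R + s := by
        have hsq : c ^ 2 + ch ^ 2 ≤ (R + s) ^ 2 := by
          nlinarith [sq_abs (x - y), hch2, hRsq, hcsq, h2R, h]
        calc d ≤ Real.sqrt ((R + s) ^ 2) := Real.sqrt_le_sqrt hsq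
          _ = R + s := Real.sqrt_sq (by positivity)
      have hcd : |c| ≤ d := by
        rw [hd, ← Real.sqrt_sq_eq_abs]
        exact Real.sqrt_le_sqrt (by nlinarith)
      have hRd : R ≤ d + s := by
        have h1 : R ≤ |c| + x := by
          rcases abs_cases (x - y) with ⟨h1, h2⟩ | ⟨h1, h2⟩ <;>
            rcases abs_cases ((x + y) / 2) with ⟨h3, h4⟩ | ⟨h3, h4⟩ <;>
            rw [hR, hc] at * <;> linarith
        linarith
      obtain ⟨z0, hz0⟩ : ∃ z0 : ℂ,
          z0 = (c : ℂ) + ((R / d : ℝ) : ℂ) * ((ch : ℂ) * Complex.I - (c : ℂ)) := ⟨_, rfl⟩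
      have him : 0 < z0.im := by
        rw [hz0, him_aux]; positivity
      have habs' : ‖(ch : ℂ) * Complex.I - (c : ℂ)‖ = d := by
        rw [norm_sub_rev, habs, hd]
      refine ⟨⟨z0, him⟩, ?_, ?_⟩
      · show ‖z0 - (c : ℂ)‖ = R
        have h1 : z0 - (c : ℂ) = ((R / d : ℝ) : ℂ) * ((ch : ℂ) * Complex.I - (c : ℂ)) := by
          rw [hz0]; ring
        rw [h1, norm_mul, Complex.norm_real, Real.norm_eq_abs, abs_of_pos (by positivity), habs',
          div_mul_cancel₀ _ (ne_of_gt hd0)]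
      · rw [UpperHalfPlane.dist_le_iff_dist_coe_center_le, hcent, UpperHalfPlane.I_im, one_mul]
        show dist z0 ((ch : ℂ) * Complex.I) ≤ s
        rw [Complex.dist_eq]
        have hid : z0 - (ch : ℂ) * Complex.I
            = (((d - R) / d : ℝ) : ℂ) * ((c : ℂ) - (ch : ℂ) * Complex.I) := by
          rw [hz0]
          exact hid_aux c ch d R (ne_of_gt hd0)
        rw [hid, norm_mul, Complex.norm_real, Real.norm_eq_abs, habs, abs_div, abs_of_pos hd0,
          div_mul_cancel₀ _ (ne_of_gt hd0)]
        rw [abs_sub_le_iff]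
        constructor <;> linarith
  exact key.trans (alg_iff s x y hs0 hx0 hx hy)
end

section
/- For every r > 0, every real x < −sinh r, and every real y with y ≠ x, the geodesic γ(x,y) with ideal endpoints x and y intersects the closed hyperbolic disc B̄_r(i) if and only if −W_r(−x) ≤ y ≤ −U_r(−x). -/
open UpperHalfPlane MeasureTheory

private lemma sq_le_sq_iff_aux {a b : ℝ} (ha : 0 ≤ a) (hb : 0 ≤ b) :
    a ^ 2 ≤ b ^ 2 ↔ a ≤ b := by
  constructor <;> intro h <;> nlinarith

/-- `dist z I ≤ r` is a Euclidean disc condition. -/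
private lemma dist_I_le_iff (z : ℍ) (r : ℝ) (hr : 0 < r) :
    dist z UpperHalfPlane.I ≤ r ↔
      (z : ℂ).re ^ 2 + ((z : ℂ).im - Real.cosh r) ^ 2 ≤ Real.sinh r ^ 2 := by
  have hs : 0 < Real.sinh r := Real.sinh_pos_iff.2 hr
  rw [UpperHalfPlane.dist_le_iff_dist_coe_center_le]
  have him : (UpperHalfPlane.I.center r : ℂ).im = Real.cosh r := by
    simp [UpperHalfPlane.coe_im, UpperHalfPlane.center_im, UpperHalfPlane.I_im]
  have hre : (UpperHalfPlane.I.center r : ℂ).re = 0 := by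
    simp [UpperHalfPlane.coe_re, UpperHalfPlane.center_re, UpperHalfPlane.I_re]
  have h1 : UpperHalfPlane.I.im * Real.sinh r = Real.sinh r := by
    rw [UpperHalfPlane.I_im, one_mul]
  rw [h1, ← sq_le_sq_iff_aux dist_nonneg hs.le, Complex.dist_eq, Complex.sq_norm,
    Complex.normSq_apply, Complex.sub_re, Complex.sub_im, hre, him]
  constructor <;> intro h <;> nlinarith [h]

set_option maxHeartbeats 1000000 in
private lemma meets_iff_poly (r : ℝ) (hr : 0 < r) (x y : ℝ) (hy : y ≠ x) :
    MeetsClosedDisc x y r ↔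
      (x ^ 2 + 1) * (y ^ 2 + 1) ≤ (x - y) ^ 2 * Real.cosh r ^ 2 := by
  have hs : 0 < Real.sinh r := Real.sinh_pos_iff.2 hr
  have hch : 0 < Real.cosh r := Real.cosh_pos r
  have hch2 : Real.cosh r ^ 2 = 1 + Real.sinh r ^ 2 := Real.cosh_sq' r
  set s := Real.sinh r with hs_def
  set ch := Real.cosh r with hch_def
  set c : ℝ := (x + y) / 2 with hc
  have hRabs : (|x - y| / 2) ^ 2 = (x - y) ^ 2 / 4 := by
    rw [div_pow, sq_abs]; norm_num
  constructor
  · rintro ⟨z, hz, hdist⟩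
    have hb : 0 < (z : ℂ).im := z.2
    set a := (z : ℂ).re with ha
    set b := (z : ℂ).im with hb_def
    set q : ℝ := (x - y) ^ 2 / 4 with hq_def
    -- circle equation
    have hcirc : (a - c) ^ 2 + b ^ 2 = q := by
      have h2 : ‖(z : ℂ) - (c : ℂ)‖ ^ 2 = (|x - y| / 2) ^ 2 := by
        rw [geodesic, Set.mem_setOf_eq] at hz; rw [hz]
      rw [Complex.sq_norm, Complex.normSq_apply, Complex.sub_re, Complex.sub_im,
        Complex.ofReal_re, Complex.ofReal_im, hRabs] at h2
      rw [ha, hb_def]; linear_combination h2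
    have hdisc : a ^ 2 + (b - ch) ^ 2 ≤ s ^ 2 := (dist_I_le_iff z r hr).1 hdist
    have hq : 0 ≤ q := by rw [hq_def]; positivity
    clear_value s ch a b
    set L : ℝ := -(a - c) * c + b * ch with hL
    have hCS : L ^ 2 ≤ ((a - c) ^ 2 + b ^ 2) * (c ^ 2 + ch ^ 2) := by
      nlinarith [sq_nonneg ((a - c) * ch + b * c)]
    rw [hcirc] at hCS
    have hLlow : c ^ 2 + ch ^ 2 + q - s ^ 2 ≤ 2 * L := by
      nlinarith [hcirc, hdisc]
    have hpos : 0 < c ^ 2 + q + 1 := by positivity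
    have hA : c ^ 2 + q + 1 ≤ 2 * L := by linarith [hLlow, hch2]
    have hA2 : (c ^ 2 + q + 1) ^ 2 ≤ 4 * L ^ 2 := by nlinarith [hA, hpos]
    have hkey : (c ^ 2 + q + 1) ^ 2 ≤ 4 * q * (c ^ 2 + ch ^ 2) := by
      linarith [hA2, hCS]
    rw [hq_def, hc] at hkey
    clear_value q c
    linarith [hkey]
  · intro hineq
    have hd2pos : 0 < c ^ 2 + ch ^ 2 := by positivity
    set d : ℝ := Real.sqrt (c ^ 2 + ch ^ 2) with hd_def
    have hd2 : d ^ 2 = c ^ 2 + ch ^ 2 := Real.sq_sqrt hd2pos.le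
    have hd0 : 0 < d := Real.sqrt_pos.2 hd2pos
    have hdne : d ≠ 0 := hd0.ne'
    set R : ℝ := |x - y| / 2 with hR_def
    have hR : 0 < R := by
      have h0 : x - y ≠ 0 := sub_ne_zero.2 (Ne.symm hy)
      have := abs_pos.2 h0
      rw [hR_def]; positivity
    have hR2 : R ^ 2 = (x - y) ^ 2 / 4 := hRabs
    have him : 0 < R * ch / d := by positivity
    refine ⟨UpperHalfPlane.mk ⟨c - R * c / d, R * ch / d⟩ (by simpa using him), ?_, ?_⟩
    · show ‖_‖ = _
      rw [UpperHalfPlane.coe_mk]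
      have hnorm : Complex.normSq ((⟨c - R * c / d, R * ch / d⟩ : ℂ) - (c : ℂ)) = R ^ 2 := by
        rw [Complex.normSq_apply, Complex.sub_re, Complex.sub_im, Complex.ofReal_re,
          Complex.ofReal_im]
        show (c - R * c / d - c) * (c - R * c / d - c) + (R * ch / d - 0) * (R * ch / d - 0)
          = R ^ 2
        have e0 : (c - R * c / d - c) * (c - R * c / d - c) + (R * ch / d - 0) * (R * ch / d - 0)
            = R ^ 2 * (c ^ 2 + ch ^ 2) / d ^ 2 := by
          field_simp
          ring
        rw [e0, ← hd2, mul_div_assoc, div_self (pow_ne_zero 2 hdne), mul_one]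
      rw [Complex.norm_def, hnorm, Real.sqrt_sq hR.le]
    · rw [dist_I_le_iff _ r hr]
      rw [UpperHalfPlane.coe_mk]
      show (c - R * c / d) ^ 2 + (R * ch / d - ch) ^ 2 ≤ s ^ 2
      have hval : (c - R * c / d) ^ 2 + (R * ch / d - ch) ^ 2 = (d - R) ^ 2 := by
        have e1 : (c - R * c / d) ^ 2 + (R * ch / d - ch) ^ 2
            = (d - R) ^ 2 * (c ^ 2 + ch ^ 2) / d ^ 2 := by
          field_simp
          ring
        rw [e1, ← hd2, mul_div_assoc, div_self (pow_ne_zero 2 hdne), mul_one]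
      rw [hval]
      have e1 : (c ^ 2 + R ^ 2 + 1) ^ 2 - 4 * R ^ 2 * c ^ 2 = (x ^ 2 + 1) * (y ^ 2 + 1) := by
        rw [hR2, hc]; ring
      have e2 : (2 * R * d) ^ 2 = 4 * R ^ 2 * c ^ 2 + 4 * R ^ 2 * ch ^ 2 := by
        have : (2 * R * d) ^ 2 = 4 * R ^ 2 * d ^ 2 := by ring
        rw [this, hd2]; ring
      have e3 : (x - y) ^ 2 * ch ^ 2 = 4 * R ^ 2 * ch ^ 2 := by
        rw [hR2]; ring
      have hsq : (c ^ 2 + R ^ 2 + 1) ^ 2 ≤ (2 * R * d) ^ 2 := by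
        rw [e2]; linarith [hineq, e1, e3]
      have hle : c ^ 2 + R ^ 2 + 1 ≤ 2 * R * d := by
        have h1 : (0:ℝ) ≤ c ^ 2 + R ^ 2 + 1 := by positivity
        have h2 : (0:ℝ) ≤ 2 * R * d := by positivity
        exact (sq_le_sq_iff_aux h1 h2).1 hsq
      clear_value s ch c d R
      nlinarith [hle, hd2, hch2]

set_option maxHeartbeats 1000000 in
/-- For every r > 0, every real x < −sinh r, and every real y ≠ x, the geodesic γ(x,y)
intersects the closed disc B̄_r(i) iff −W_r(−x) ≤ y ≤ −U_r(−x). -/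
theorem meets_iff_of_lt_neg_sinh (r : ℝ) (hr : 0 < r) (x : ℝ) (hx : x < -Real.sinh r)
    (y : ℝ) (hy : y ≠ x) :
    MeetsClosedDisc x y r ↔
      -((-x * Real.sinh r - 1) / (-x + Real.sinh r)) ≤ y ∧
        y ≤ -((-x * Real.sinh r + 1) / (x + Real.sinh r)) := by
  have hs : 0 < Real.sinh r := Real.sinh_pos_iff.2 hr
  have hch2 : Real.cosh r ^ 2 = 1 + Real.sinh r ^ 2 := Real.cosh_sq' r
  set s := Real.sinh r with hs_def
  have hd1 : s - x ≠ 0 := by intro h; nlinarith [h]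
  have hd1' : -x + s ≠ 0 := by intro h; nlinarith [h]
  have hd2 : x + s ≠ 0 := by intro h; nlinarith [h]
  have hx2 : s ^ 2 < x ^ 2 := by nlinarith
  set y1 : ℝ := -((-x * s - 1) / (-x + s)) with hy1
  set y2 : ℝ := -((-x * s + 1) / (x + s)) with hy2
  have hy1' : y1 = (x * s + 1) / (s - x) := by
    rw [hy1]; field_simp; ring
  have hy2' : y2 = (x * s - 1) / (x + s) := by
    rw [hy2]; field_simp; ring
  have hxs2 : x ^ 2 - s ^ 2 ≠ 0 := by nlinarith
  have h12 : y1 ≤ y2 := by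
    have hdiff : (y2 - y1) * (x ^ 2 - s ^ 2) = 2 * s * (x ^ 2 + 1) := by
      rw [hy1', hy2']
      field_simp
      ring
    nlinarith [hdiff, hx2, hs]
  have hfact : (x ^ 2 + 1) * (y ^ 2 + 1) - (x - y) ^ 2 * Real.cosh r ^ 2
      = (x ^ 2 - s ^ 2) * ((y - y1) * (y - y2)) := by
    rw [hy1', hy2', hch2]
    field_simp
    ring
  rw [meets_iff_poly r hr x y hy]
  clear_value s y1 y2
  constructor
  · intro h
    have hprod : (y - y1) * (y - y2) ≤ 0 := by
      nlinarith [hfact, hx2, h]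
    exact ⟨by nlinarith [hprod, h12], by nlinarith [hprod, h12]⟩
  · rintro ⟨h1, h2⟩
    have hprod : (y - y1) * (y - y2) ≤ 0 :=
      mul_nonpos_of_nonneg_of_nonpos (by linarith) (by linarith)
    nlinarith [hfact, hx2, hprod]
end

section
/- For every r > 0 and every real x with |x| ≠ sinh r, the Lebesgue integral ∫_{I_x} (x − y)^{−2} dy over the set I_x = {y ∈ ℝ : y ≠ x and the geodesic γ(x,y) intersects B̄_r(i)} equals 2·sinh r/(x² + 1). -/
open UpperHalfPlane MeasureTheory

set_option maxHeartbeats 1000000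

lemma meets_iff (r x y : ℝ) (hr : 0 < r) (hxy : y ≠ x) :
    MeetsClosedDisc x y r ↔ (x^2+1)*(y^2+1) ≤ Real.cosh r ^ 2 * (x - y)^2 := by
  constructor
  · rintro ⟨z, hz, hd⟩
    set u := (z : ℂ).re with hu
    set v := (z : ℂ).im with hv
    have hv0 : 0 < v := z.2
    have h1 : (u - (x + y)/2)^2 + v^2 = ((x - y)/2)^2 := by
      have h2 : ‖(z:ℂ) - (((x+y)/2 : ℝ):ℂ)‖ ^ 2 = (|x - y| / 2)^2 := by
        rw [hz]
      rw [Complex.sq_norm, Complex.normSq_apply] at h2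
      simp only [Complex.sub_re, Complex.sub_im, Complex.ofReal_re, Complex.ofReal_im,
        sub_zero] at h2
      have habs : (|x - y| / 2)^2 = ((x-y)/2)^2 := by rw [div_pow, div_pow, sq_abs]
      rw [habs] at h2
      linear_combination h2
    have hcosh : Real.cosh (dist z UpperHalfPlane.I) ≤ Real.cosh r := by
      apply Real.cosh_le_cosh.mpr
      rwa [abs_of_nonneg dist_nonneg, abs_of_pos hr]
    rw [UpperHalfPlane.cosh_dist] at hcosh
    have hd2 : dist (z:ℂ) ((UpperHalfPlane.I : ℍ):ℂ) ^ 2 = u^2 + (v-1)^2 := by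
      rw [UpperHalfPlane.coe_I, Complex.dist_eq, Complex.sq_norm, Complex.normSq_apply]
      simp only [Complex.sub_re, Complex.sub_im, Complex.I_re, Complex.I_im, sub_zero]
      ring
    rw [hd2] at hcosh
    have hIim : (UpperHalfPlane.I).im = 1 := rfl
    have hzim : z.im = v := rfl
    rw [hIim, hzim] at hcosh
    have h2 : u^2 + v^2 + 1 ≤ 2*v*Real.cosh r := by
      have h3 : (u^2+(v-1)^2) ≤ (Real.cosh r - 1) * (2*v*1) := by
        rw [← div_le_iff₀ (by positivity)]
        linarith
      nlinarith
    have key : (x^2+1)*(y^2+1)*v^2 +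
        ((((x+y)/2)^2 + ((x-y)/2)^2 + 1)*(u-(x+y)/2) + 2*((x+y)/2)*((x-y)/2)^2)^2
        = ((x-y)/2)^2*(u^2+v^2+1)^2 := by
      linear_combination (-(((x-y)/2)^2*v^2) - 2*((x-y)/2)^2*(u^2+1) + (x^2+1)*(y^2+1)
        - (((x-y)/2)^2)^2 + ((x-y)/2)^2*(u-(x+y)/2)^2) * h1
    have hN : 0 < u^2 + v^2 + 1 := by positivity
    have h4 : (u^2+v^2+1)^2 ≤ (2*v*Real.cosh r)^2 := by nlinarith
    have h4' : ((x-y)/2)^2*(u^2+v^2+1)^2 ≤ ((x-y)/2)^2*(2*v*Real.cosh r)^2 :=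
      mul_le_mul_of_nonneg_left h4 (sq_nonneg _)
    have h5 : (x^2+1)*(y^2+1)*v^2 ≤ Real.cosh r^2*(x-y)^2*v^2 := by
      nlinarith [key, h4',
        sq_nonneg ((((x+y)/2)^2 + ((x-y)/2)^2 + 1)*(u-(x+y)/2) + 2*((x+y)/2)*((x-y)/2)^2)]
    exact le_of_mul_le_mul_right h5 (by positivity)
  · intro h
    have hK1 : 1 ≤ Real.cosh r := Real.one_le_cosh r
    have hxy' : x - y ≠ 0 := sub_ne_zero.mpr (Ne.symm hxy)
    set c := (x+y)/2 with hc
    set R := |x - y|/2 with hRdef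
    have hR : 0 < R := by rw [hRdef]; positivity
    have hR2 : R^2 = ((x-y)/2)^2 := by rw [hRdef, div_pow, div_pow, sq_abs]
    set A := c^2 + R^2 + 1 with hA
    have hA0 : 0 < A := by positivity
    set P := (x^2+1)*(y^2+1) with hP
    have hP0 : 0 < P := by positivity
    have hPA : P = A^2 - 4*c^2*R^2 := by rw [hP, hA, hR2, hc]; ring
    set u := c - 2*c*R^2/A with hu
    set v := R * Real.sqrt P / A with hvdef
    have hsP : Real.sqrt P ^ 2 = P := Real.sq_sqrt hP0.le
    have hsP0 : 0 < Real.sqrt P := Real.sqrt_pos.mpr hP0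
    have hv0 : 0 < v := by rw [hvdef]; exact div_pos (mul_pos hR hsP0) hA0
    have hsq : (u - c)^2 + v^2 = R^2 := by
      rw [hu, hvdef]
      field_simp
      nlinarith [hPA, hsP]
    have hN : u^2 + v^2 + 1 = P / A := by
      rw [hu, hvdef]
      field_simp
      linear_combination R^2 * hsP + (R^2 - A) * hPA + (-(A^2)) * hA
    refine ⟨UpperHalfPlane.mk ⟨u, v⟩ hv0, ?_, ?_⟩
    · simp only [geodesic, Set.mem_setOf_eq]
      rw [Complex.norm_def, Complex.normSq_apply]
      have hre : ((⟨u, v⟩ : ℂ) - (((x+y)/2 : ℝ):ℂ)).re = u - c := by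
        simp [Complex.sub_re, hc]
      have him : ((⟨u, v⟩ : ℂ) - (((x+y)/2 : ℝ):ℂ)).im = v := by
        simp [Complex.sub_im]
      rw [hre, him]
      have hsum : (u - c) * (u - c) + v * v = R^2 := by nlinarith [hsq]
      rw [hsum, Real.sqrt_sq hR.le, hRdef]
    · have h7 : Real.sqrt P ≤ 2*R*Real.cosh r := by
        rw [show 2*R*Real.cosh r = Real.sqrt ((2*R*Real.cosh r)^2) from
          (Real.sqrt_sq (by positivity)).symm]
        apply Real.sqrt_le_sqrt
        nlinarith [h, hR2]
      have h8 : P ≤ 2*R*Real.cosh r*Real.sqrt P := by nlinarith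
      have h6 : u^2 + v^2 + 1 ≤ 2*v*Real.cosh r := by
        rw [hN]
        calc P/A ≤ (2*R*Real.cosh r*Real.sqrt P)/A := by gcongr
          _ = 2*v*Real.cosh r := by rw [hvdef]; ring
      have hc2 : Real.cosh (dist (UpperHalfPlane.mk ⟨u,v⟩ hv0) UpperHalfPlane.I) ≤ Real.cosh r := by
        rw [UpperHalfPlane.cosh_dist]
        have hd2 : dist ((UpperHalfPlane.mk ⟨u,v⟩ hv0):ℂ) ((UpperHalfPlane.I : ℍ):ℂ) ^2 = u^2+(v-1)^2 := by
          rw [UpperHalfPlane.coe_I, Complex.dist_eq, Complex.sq_norm, Complex.normSq_apply]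
          rw [UpperHalfPlane.coe_mk]
          simp only [Complex.sub_re, Complex.sub_im, Complex.I_re, Complex.I_im, sub_zero]
          ring
        rw [hd2]
        have him : (UpperHalfPlane.mk ⟨u,v⟩ hv0).im = v := rfl
        have hIim : (UpperHalfPlane.I).im = 1 := rfl
        rw [him, hIim]
        have h9 : (u^2+(v-1)^2)/(2*v*1) ≤ Real.cosh r - 1 := by
          rw [div_le_iff₀ (by positivity)]
          nlinarith [h6]
        linarith
      have h10 := Real.cosh_le_cosh.mp hc2
      rwa [abs_of_nonneg dist_nonneg, abs_of_pos hr] at h10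

lemma intOn_Ici (x q : ℝ) (hq : x < q) :
    IntegrableOn (fun y : ℝ => ((x - y)^2)⁻¹) (Set.Ici q) ∧
      ∫ y in Set.Ici q, ((x - y)^2)⁻¹ = -(x - q)⁻¹ := by
  have hderiv : ∀ t ∈ Set.Ici q, HasDerivAt (fun y : ℝ => (x - y)⁻¹) (((x - t)^2)⁻¹) t := by
    intro t ht
    have h0 : x - t ≠ 0 := by
      have : q ≤ t := ht
      exact ne_of_lt (by linarith)
    have h1 : HasDerivAt (fun y : ℝ => x - y) (-1) t := (hasDerivAt_id t).const_sub x
    have h2 := h1.inv h0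
    exact h2.congr_deriv (by ring)
  have hpos : ∀ t ∈ Set.Ioi q, 0 ≤ ((x - t)^2)⁻¹ := fun t _ => by positivity
  have htend : Filter.Tendsto (fun y : ℝ => (x - y)⁻¹) Filter.atTop (nhds 0) := by
    have h4 : Filter.Tendsto (fun y : ℝ => y - x) Filter.atTop Filter.atTop := by
      have := Filter.tendsto_atTop_add_const_right Filter.atTop (-x) Filter.tendsto_id
      simpa [sub_eq_add_neg] using this
    have h5 := (tendsto_inv_atTop_zero.comp h4).neg
    rw [neg_zero] at h5
    refine h5.congr fun y => ?_
    simp [Function.comp, ← inv_neg, neg_sub]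
  constructor
  · rw [integrableOn_Ici_iff_integrableOn_Ioi]
    exact integrableOn_Ioi_deriv_of_nonneg' hderiv hpos htend
  · rw [MeasureTheory.integral_Ici_eq_integral_Ioi,
      integral_Ioi_of_hasDerivAt_of_nonneg' hderiv hpos htend, zero_sub]

lemma intOn_Iic (x p : ℝ) (hp : p < x) :
    IntegrableOn (fun y : ℝ => ((x - y)^2)⁻¹) (Set.Iic p) ∧
      ∫ y in Set.Iic p, ((x - y)^2)⁻¹ = (x - p)⁻¹ := by
  have hderiv : ∀ t ∈ Set.Ici (-p), HasDerivAt (fun t : ℝ => -(x + t)⁻¹) (((x + t)^2)⁻¹) t := by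
    intro t ht
    have h0 : x + t ≠ 0 := by
      have : -p ≤ t := ht
      exact ne_of_gt (by linarith)
    have h1 : HasDerivAt (fun t : ℝ => x + t) 1 t := (hasDerivAt_id t).const_add x
    have h2 := (h1.inv h0).neg
    exact h2.congr_deriv (by ring)
  have hpos : ∀ t ∈ Set.Ioi (-p), 0 ≤ ((x + t)^2)⁻¹ := fun t _ => by positivity
  have htend : Filter.Tendsto (fun t : ℝ => -(x + t)⁻¹) Filter.atTop (nhds 0) := by
    have h3 : Filter.Tendsto (fun t : ℝ => x + t) Filter.atTop Filter.atTop :=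
      Filter.tendsto_atTop_add_const_left _ x Filter.tendsto_id
    have h4 := (tendsto_inv_atTop_zero.comp h3).neg
    rw [neg_zero] at h4
    exact h4.congr fun t => by simp [Function.comp]
  have hIoi_int : IntegrableOn (fun t : ℝ => ((x + t)^2)⁻¹) (Set.Ioi (-p)) :=
    integrableOn_Ioi_deriv_of_nonneg' hderiv hpos htend
  have hIoi_val : ∫ t in Set.Ioi (-p), ((x + t)^2)⁻¹ = 0 - -(x + -p)⁻¹ :=
    integral_Ioi_of_hasDerivAt_of_nonneg' hderiv hpos htend
  constructor
  · have A : MeasurableEmbedding fun t : ℝ => -t :=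
      (Homeomorph.neg ℝ).isClosedEmbedding.measurableEmbedding
    have B := A.integrableOn_map_iff (f := fun t : ℝ => ((x + t)^2)⁻¹)
      (s := Set.Ici (-p)) (μ := volume)
    rw [Measure.map_neg_eq_self (volume : Measure ℝ)] at B
    have hIci : IntegrableOn (fun t : ℝ => ((x + t)^2)⁻¹) (Set.Ici (-p)) :=
      Iff.mpr integrableOn_Ici_iff_integrableOn_Ioi hIoi_int
    have C := B.mp hIci
    have hpre : (fun t : ℝ => -t) ⁻¹' Set.Ici (-p) = Set.Iic p := by
      ext t
      simp only [Set.mem_preimage, Set.mem_Ici, Set.mem_Iic, neg_le_neg_iff]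
    rw [hpre] at C
    simpa [Function.comp_def, sub_eq_add_neg] using C
  · have h6 := integral_comp_neg_Iic p (fun t : ℝ => ((x + t)^2)⁻¹)
    rw [hIoi_val] at h6
    simp only [sub_eq_add_neg]
    rw [h6]
    simp

/-- For every r > 0 and every real x with |x| ≠ sinh r, the Lebesgue integral of
(x − y)⁻² over I_x = {y ≠ x : γ(x,y) meets B̄_r(i)} equals 2·sinh r/(x² + 1). -/
theorem integral_over_Ix (r : ℝ) (hr : 0 < r) (x : ℝ) (hx : |x| ≠ Real.sinh r) :
    ∫ y in {y : ℝ | y ≠ x ∧ MeetsClosedDisc x y r}, ((x - y) ^ 2)⁻¹ =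
      2 * Real.sinh r / (x ^ 2 + 1) := by
  set s := Real.sinh r with hs
  have hs0 : 0 < s := by rw [hs]; exact Real.sinh_pos_iff.mpr hr
  have hK2 : Real.cosh r ^ 2 = s ^ 2 + 1 := by rw [hs, Real.cosh_sq]
  have hxps : x + s ≠ 0 := by
    intro h0
    apply hx
    rw [show x = -s by linarith, abs_neg, abs_of_pos hs0]
  have hxms : x - s ≠ 0 := by
    intro h0
    apply hx
    rw [show x = s by linarith, abs_of_pos hs0]
  have hx1 : (x : ℝ) ^ 2 + 1 ≠ 0 := by positivity
  have hx2s : x ^ 2 ≠ s ^ 2 := by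
    intro h0
    rcases mul_eq_zero.mp (show (x - s) * (x + s) = 0 by nlinarith) with h | h
    · exact hxms h
    · exact hxps h
  have hsx0 : s - x ≠ 0 := fun h0 => hxms (by linarith)
  set p := (s * x - 1) / (x + s) with hp
  set q := (s * x + 1) / (s - x) with hq
  have hxp : x - p = (x ^ 2 + 1) / (x + s) := by rw [hp]; field_simp; ring
  have hxq : x - q = (x ^ 2 + 1) / (x - s) := by rw [hq]; field_simp; ring
  have hId : ∀ y : ℝ, Real.cosh r ^ 2 * (x - y) ^ 2 - (x ^ 2 + 1) * (y ^ 2 + 1)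
      = -((x ^ 2 - s ^ 2) * ((y - p) * (y - q))) := by
    intro y
    rw [hK2, hp, hq]
    field_simp
    ring
  have hiff : ∀ y : ℝ, y ≠ x →
      (MeetsClosedDisc x y r ↔ (x ^ 2 - s ^ 2) * ((y - p) * (y - q)) ≤ 0) := by
    intro y hy
    rw [meets_iff r x y hr hy]
    constructor <;> intro h' <;> nlinarith [hId y]
  have hxnot : 0 < (x ^ 2 - s ^ 2) * ((x - p) * (x - q)) := by
    nlinarith [hId x, sq_nonneg (x * x)]
  rcases lt_or_gt_of_ne hx2s with hlt | hgt
  · -- case |x| < s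
    have h1 : 0 < s - x := by by_contra hcon; push_neg at hcon; nlinarith
    have h2 : 0 < s + x := by by_contra hcon; push_neg at hcon; nlinarith
    have hpx : p < x := by
      have h3 : 0 < x - p := by rw [hxp]; exact div_pos (by positivity) (by linarith)
      linarith
    have hqx : x < q := by
      have h3 : x - q < 0 := by
        rw [hxq]; exact div_neg_of_pos_of_neg (by positivity) (by linarith)
      linarith
    have hdisj : Disjoint (Set.Iic p) (Set.Ici q) := by
      rw [Set.disjoint_left]
      intro a ha hb
      simp only [Set.mem_Iic] at ha
      simp only [Set.mem_Ici] at hb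
      linarith
    have hseq : {y : ℝ | y ≠ x ∧ MeetsClosedDisc x y r} = Set.Iic p ∪ Set.Ici q := by
      ext y
      simp only [Set.mem_setOf_eq, Set.mem_union, Set.mem_Iic, Set.mem_Ici]
      constructor
      · rintro ⟨hyx, hm⟩
        have h' := (hiff y hyx).mp hm
        by_contra hcon
        push_neg at hcon
        obtain ⟨hc1, hc2⟩ := hcon
        nlinarith [mul_pos (mul_pos (sub_pos.mpr hc1) (sub_pos.mpr hc2))
          (sub_pos.mpr hlt)]
      · intro hcon
        have hyx : y ≠ x := by
          rcases hcon with h' | h' <;> intro he <;> rw [he] at h' <;> linarith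
        refine ⟨hyx, (hiff y hyx).mpr ?_⟩
        rcases hcon with h' | h'
        · nlinarith [mul_nonneg (sub_nonneg.mpr h')
            (le_of_lt (sub_pos.mpr (lt_trans (lt_of_le_of_lt h' hpx) hqx))),
            sub_pos.mpr hlt]
        · nlinarith [mul_nonneg (sub_nonneg.mpr h')
            (le_of_lt (sub_pos.mpr (lt_trans hpx (lt_of_lt_of_le hqx h')))),
            sub_pos.mpr hlt]
    rw [hseq, setIntegral_union hdisj measurableSet_Ici (intOn_Iic x p hpx).1
      (intOn_Ici x q hqx).1, (intOn_Iic x p hpx).2, (intOn_Ici x q hqx).2, hxp, hxq]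
    field_simp
    ring
  · -- case |x| > s
    have hqltp : q < p := by
      have hd : x ^ 2 - s ^ 2 ≠ 0 := sub_ne_zero.mpr hx2s
      have h3 : p - q = 2 * s * (x ^ 2 + 1) / (x ^ 2 - s ^ 2) := by
        rw [hp, hq]
        rw [div_sub_div _ _ hxps hsx0, div_eq_div_iff (by
          intro h0
          apply hd
          nlinarith [h0]) hd]
        ring
      have h4 : 0 < p - q := by
        rw [h3]; exact div_pos (by positivity) (by linarith)
      linarith
    have hne : ∀ t ∈ Set.uIcc q p, x - t ≠ 0 := by
      intro t ht h0
      rw [Set.uIcc_of_le hqltp.le, Set.mem_Icc] at ht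
      have h1 : q ≤ x := by linarith [ht.1]
      have h2 : x ≤ p := by linarith [ht.2]
      nlinarith [hxnot, mul_nonneg (mul_nonneg (le_of_lt (sub_pos.mpr hgt))
        (sub_nonneg.mpr h1)) (sub_nonneg.mpr h2)]
    have hseq : {y : ℝ | y ≠ x ∧ MeetsClosedDisc x y r} = Set.Icc q p := by
      ext y
      simp only [Set.mem_setOf_eq, Set.mem_Icc]
      constructor
      · rintro ⟨hyx, hm⟩
        have h' := (hiff y hyx).mp hm
        constructor
        · by_contra hcon
          push_neg at hcon
          nlinarith [mul_pos (mul_pos (sub_pos.mpr (hcon.trans hqltp))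
            (sub_pos.mpr hcon)) (sub_pos.mpr hgt)]
        · by_contra hcon
          push_neg at hcon
          nlinarith [mul_pos (mul_pos (sub_pos.mpr hcon)
            (sub_pos.mpr (hqltp.trans hcon))) (sub_pos.mpr hgt)]
      · rintro ⟨h1, h2⟩
        have hyx : y ≠ x := by
          intro he
          rw [he] at h1 h2
          nlinarith [hxnot, mul_nonneg (mul_nonneg (le_of_lt (sub_pos.mpr hgt))
            (sub_nonneg.mpr h1)) (sub_nonneg.mpr h2)]
        refine ⟨hyx, (hiff y hyx).mpr ?_⟩
        nlinarith [mul_nonneg (mul_nonneg (le_of_lt (sub_pos.mpr hgt))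
          (sub_nonneg.mpr h1)) (sub_nonneg.mpr h2)]
    have hderiv : ∀ t ∈ Set.uIcc q p,
        HasDerivAt (fun y : ℝ => (x - y)⁻¹) (((x - t) ^ 2)⁻¹) t := by
      intro t ht
      have h0 := hne t ht
      have hd1 : HasDerivAt (fun y : ℝ => x - y) (-1) t := (hasDerivAt_id t).const_sub x
      have hd2 := hd1.inv h0
      exact hd2.congr_deriv (by ring)
    have hint : IntervalIntegrable (fun y : ℝ => ((x - y) ^ 2)⁻¹) volume q p := by
      apply ContinuousOn.intervalIntegrable
      apply ContinuousOn.inv₀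
      · exact Continuous.continuousOn (by continuity)
      · intro t ht
        exact pow_ne_zero 2 (hne t ht)
    rw [hseq, MeasureTheory.integral_Icc_eq_integral_Ioc,
      ← intervalIntegral.integral_of_le hqltp.le,
      intervalIntegral.integral_eq_sub_of_hasDerivAt hderiv hint, hxp, hxq]
    field_simp
    ring
end

section
/- For every r > 0, writing s = sinh r, W_r(x) = (x·s − 1)/(x + s) and U_r(x) = (x·s + 1)/(−x + s), one has ∫_0^{s} ( ∫_{−∞}^{W_r(x)} (x − y)^{−2} dy + ∫_{U_r(x)}^{∞} (x − y)^{−2} dy ) dx + ∫_{s}^{∞} ∫_{U_r(x)}^{W_r(x)} (x − y)^{−2} dy dx = π·sinh r. -/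
open MeasureTheory Set Filter Real Topology

lemma int_Ioi_aux (x c : ℝ) (h : x < c) :
    ∫ y in Set.Ioi c, ((x - y) ^ 2)⁻¹ = (c - x)⁻¹ := by
  have key : ∫ y in Set.Ioi c, ((x - y) ^ 2)⁻¹ = 0 - (-(c - x)⁻¹) := by
    apply integral_Ioi_of_hasDerivAt_of_nonneg' (g := fun y => -(y - x)⁻¹)
    · intro y hy
      have hne : y - x ≠ 0 := by simp only [mem_Ici] at hy; intro hc; nlinarith
      have := (((hasDerivAt_id y).sub_const x).inv hne).neg
      convert this using 1
      all_goals try rfl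
      simp only [id_eq, neg_div, neg_neg, one_div]
      congr 1
      ring
    · intro y _; positivity
    · have h1 : Tendsto (fun y : ℝ => y - x) atTop atTop :=
        tendsto_atTop_add_const_right _ (-x) tendsto_id
      have := (tendsto_inv_atTop_zero.comp h1).neg
      simpa using this
  rw [key]
  ring

lemma int_Iio_aux (x a : ℝ) (h : a < x) :
    ∫ y in Set.Iio a, ((x - y) ^ 2)⁻¹ = (x - a)⁻¹ := by
  rw [setIntegral_congr_set Iio_ae_eq_Iic]
  have : ∀ y : ℝ, ((x - y) ^ 2)⁻¹ = (fun z => ((x + z) ^ 2)⁻¹) (-y) := by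
    intro y; simp [sub_eq_add_neg]
  simp_rw [this]
  rw [integral_comp_neg_Iic a (fun z => ((x + z) ^ 2)⁻¹)]
  have key : ∫ z in Set.Ioi (-a), ((x + z) ^ 2)⁻¹ = 0 - (-(x + -a)⁻¹) := by
    apply integral_Ioi_of_hasDerivAt_of_nonneg' (g := fun z => -(x + z)⁻¹)
    · intro z hz
      have hne : x + z ≠ 0 := by simp only [mem_Ici] at hz; intro hc; nlinarith
      have := (((hasDerivAt_id z).const_add x).inv hne).neg
      convert this using 1
      all_goals try rfl
      simp only [id_eq, neg_div, neg_neg, one_div]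
    · intro z _; positivity
    · have h1 : Tendsto (fun z : ℝ => x + z) atTop atTop :=
        tendsto_atTop_add_const_left _ x tendsto_id
      have := (tendsto_inv_atTop_zero.comp h1).neg
      simpa using this
  rw [key]
  ring

/-- For every r > 0, with s = sinh r, W_r(x) = (x·s − 1)/(x + s) and
U_r(x) = (x·s + 1)/(−x + s), one has
∫₀^s (∫_{−∞}^{W_r(x)} (x−y)⁻² dy + ∫_{U_r(x)}^∞ (x−y)⁻² dy) dx
  + ∫_s^∞ ∫_{U_r(x)}^{W_r(x)} (x−y)⁻² dy dx = π·sinh r. -/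
theorem integral_sum_eq_pi_sinh (r : ℝ) (hr : 0 < r) :
    (∫ x in (0:ℝ)..Real.sinh r,
        ((∫ y in Set.Iio ((x * Real.sinh r - 1) / (x + Real.sinh r)), ((x - y) ^ 2)⁻¹) +
          ∫ y in Set.Ioi ((x * Real.sinh r + 1) / (-x + Real.sinh r)), ((x - y) ^ 2)⁻¹)) +
      (∫ x in Set.Ioi (Real.sinh r),
        ∫ y in ((x * Real.sinh r + 1) / (-x + Real.sinh r))..
            ((x * Real.sinh r - 1) / (x + Real.sinh r)), ((x - y) ^ 2)⁻¹) =
      Real.pi * Real.sinh r := by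
  set s := Real.sinh r with hs_def
  have hs : 0 < s := Real.sinh_pos_iff.mpr hr
  -- first term
  have h1 : (∫ x in (0:ℝ)..s,
      ((∫ y in Set.Iio ((x * s - 1) / (x + s)), ((x - y) ^ 2)⁻¹) +
        ∫ y in Set.Ioi ((x * s + 1) / (-x + s)), ((x - y) ^ 2)⁻¹))
      = 2 * s * Real.arctan s := by
    have hcongr : ∀ᵐ x : ℝ, x ∈ Set.uIoc (0:ℝ) s →
        ((∫ y in Set.Iio ((x * s - 1) / (x + s)), ((x - y) ^ 2)⁻¹) +
          ∫ y in Set.Ioi ((x * s + 1) / (-x + s)), ((x - y) ^ 2)⁻¹)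
        = 2 * s * (1 + x ^ 2)⁻¹ := by
      have hne : ∀ᵐ x : ℝ, x ≠ s := by
        rw [ae_iff]
        simpa using Real.volume_singleton (a := s)
      filter_upwards [hne] with x hxne hx
      rw [Set.uIoc_of_le hs.le] at hx
      have hx0 : 0 < x := hx.1
      have hxs : x < s := lt_of_le_of_ne hx.2 hxne
      have hd1 : 0 < x + s := by linarith
      have hd2 : 0 < -x + s := by linarith
      have hx2 : (0:ℝ) < x ^ 2 + 1 := by positivity
      have hW : (x * s - 1) / (x + s) < x := by
        rw [div_lt_iff₀ hd1]; nlinarith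
      have hU : x < (x * s + 1) / (-x + s) := by
        rw [lt_div_iff₀ hd2]; nlinarith
      rw [int_Iio_aux _ _ hW, int_Ioi_aux _ _ hU]
      rw [show x - (x * s - 1) / (x + s) = (x ^ 2 + 1) / (x + s) by
        field_simp; ring]
      rw [show (x * s + 1) / (-x + s) - x = (x ^ 2 + 1) / (-x + s) by
        field_simp; ring]
      rw [inv_div, inv_div]
      field_simp
      ring
    rw [intervalIntegral.integral_congr_ae hcongr]
    rw [intervalIntegral.integral_const_mul, integral_inv_one_add_sq]
    simp [Real.arctan_zero]
  have h2 : (∫ x in Set.Ioi s,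
      ∫ y in ((x * s + 1) / (-x + s))..((x * s - 1) / (x + s)), ((x - y) ^ 2)⁻¹)
      = 2 * s * (Real.pi / 2) - 2 * s * Real.arctan s := by
    have hcongr : ∀ x ∈ Set.Ioi s,
        (∫ y in ((x * s + 1) / (-x + s))..((x * s - 1) / (x + s)), ((x - y) ^ 2)⁻¹)
        = 2 * s * (1 + x ^ 2)⁻¹ := by
      intro x hx
      simp only [Set.mem_Ioi] at hx
      have hx0 : 0 < x := lt_trans hs hx
      have hd1 : 0 < x + s := by linarith
      have hd2 : -x + s < 0 := by linarith
      have hx2 : (0:ℝ) < x ^ 2 + 1 := by positivity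
      set U := (x * s + 1) / (-x + s) with hU_def
      set W := (x * s - 1) / (x + s) with hW_def
      have hW : W < x := by rw [hW_def, div_lt_iff₀ hd1]; nlinarith
      have hU : U < x := by
        rw [hU_def, div_lt_iff_of_neg hd2]; nlinarith
      have hkey : (∫ y in U..W, ((x - y) ^ 2)⁻¹) = (x - W)⁻¹ - (x - U)⁻¹ := by
        apply intervalIntegral.integral_eq_sub_of_hasDerivAt
          (f := fun y => (x - y)⁻¹)
        · intro y hy
          have hyx : y < x := lt_of_le_of_lt hy.2 (max_lt hU hW)
          have hne : x - y ≠ 0 := by intro hc; nlinarith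
          have := ((hasDerivAt_const y x).sub (hasDerivAt_id y)).inv hne
          convert this using 1
          all_goals try rfl
          simp only [id_eq, Pi.sub_apply]
          rw [show -(0 - 1) / (x - y) ^ 2 = 1 / (x - y)^2 by ring, one_div]
        · apply ContinuousOn.intervalIntegrable
          apply ContinuousOn.inv₀
          · fun_prop
          · intro y hy
            have hyx : y < x := lt_of_le_of_lt hy.2 (max_lt hU hW)
            intro hc; nlinarith [sq_nonneg (x - y)]
      rw [hkey]
      rw [show x - W = (x ^ 2 + 1) / (x + s) by
        rw [hW_def]; field_simp; ring]
      rw [show x - U = (x ^ 2 + 1) / (x - s) by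
        rw [hU_def]
        have : -x + s ≠ 0 := ne_of_lt hd2
        have : x - s ≠ 0 := by intro hc; apply this; linarith
        field_simp
        ring]
      rw [inv_div, inv_div]
      have hxsne : x - s ≠ 0 := by intro hc; linarith
      field_simp
      ring
    rw [setIntegral_congr_fun measurableSet_Ioi hcongr]
    have key : ∫ x in Set.Ioi s, 2 * s * (1 + x ^ 2)⁻¹
        = 2 * s * (Real.pi / 2) - 2 * s * Real.arctan s := by
      apply integral_Ioi_of_hasDerivAt_of_nonneg' (g := fun x => 2 * s * Real.arctan x)
      · intro x _
        have := (Real.hasDerivAt_arctan' x).const_mul (2 * s)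
        simpa using this
      · intro x _; positivity
      · have := Real.tendsto_arctan_atTop.mono_right nhdsWithin_le_nhds
        exact (this.const_mul (2 * s))
    exact key
  rw [h1, h2]
  ring
end
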